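/- arXiv:2501.19105 — 2 statements merged into one kernel-verified Lean document; each statement's English description precedes it below -/
import Mathlib

section
/- Let X be a random variable with finite support 𝒳 in which every point has positive probability, let h_s: 𝒳 → ℝ^{d_s} and h_w: 𝒳 → ℝ^{d_w} be maps, let g: 𝒳 → (0,1), let f_w: ℝ^{d_w} → (0,1), and let 𝓕 be a set of functions ℝ^{d_s} → (0,1) such that g = f_* ∘ h_s for some f_* ∈ 𝓕, and such that ρ₁ := E[sup_{f ∈ 𝓕} 1/f(h_s(X))] and ρ₂ := E[sup_{f ∈ 𝓕} 1/(1 − f(h_s(X)))] are both finite. Then for every k ∈ ℕ and every ε > 0 there exists δ > 0 such that every f_s ∈ co^k 𝓕 satisfying E[D_KL(f_s(h_s(X)) ‖ f_w(h_w(X)))] ≤ inf_{f ∈ co^k 𝓕} E[D_KL(f(h_s(X)) ‖ f_w(h_w(X)))] + δ also satisfies E[XE(g(X) ‖ f_s(h_s(X)))] ≤ E[XE(g(X) ‖ f_w(h_w(X)))] − E[D_KL(f_s(h_s(X)) ‖ f_w(h_w(X)))] + (ρ₁ + ρ₂)/(8k) + (max(ρ₁, ρ₂))^{3/2}·√(2/(4k))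 + ε. -/
open Real

/-- Binary KL divergence `D_KL(p ‖ q) = p log(p/q) + (1−p) log((1−p)/(1−q))`. -/
noncomputable def klBin (p q : ℝ) : ℝ :=
  p * Real.log (p / q) + (1 - p) * Real.log ((1 - p) / (1 - q))

/-- Binary cross-entropy `XE(p ‖ q) = −p log q − (1−p) log(1−q)`. -/
noncomputable def xeBin (p q : ℝ) : ℝ :=
  -(p * Real.log q) - (1 - p) * Real.log (1 - q)

/-- `co^k S`: all convex combinations of (at most) `k` elements of `S`. -/
def convComb {V : Type*} [AddCommMonoid V] [Module ℝ V] (k : ℕ) (S : Set V) : Set V :=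
  {y | ∃ (w : Fin k → ℝ) (z : Fin k → V),
    (∀ i, 0 ≤ w i) ∧ ∑ i, w i = 1 ∧ (∀ i, z i ∈ S) ∧ y = ∑ i, w i • z i}


lemma klBin_eq {p q : ℝ} (hp : 0 < p) (hp1 : p < 1) (hq : 0 < q) (hq1 : q < 1) :
    klBin p q = p * (Real.log p - Real.log q) + (1-p) * (Real.log (1-p) - Real.log (1-q)) := by
  unfold klBin
  rw [Real.log_div (ne_of_gt hp) (ne_of_gt hq),
      Real.log_div (by linarith) (by linarith)]

lemma klBin_nonneg {p q : ℝ} (hp : 0 < p) (hp1 : p < 1) (hq : 0 < q) (hq1 : q < 1) :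
    0 ≤ klBin p q := by
  have h1 : Real.log (q/p) ≤ q/p - 1 := Real.log_le_sub_one_of_pos (div_pos hq hp)
  have h2 : Real.log ((1-q)/(1-p)) ≤ (1-q)/(1-p) - 1 := Real.log_le_sub_one_of_pos (div_pos (by linarith) (by linarith))
  have e1 : Real.log (p/q) = - Real.log (q/p) := by
    rw [← Real.log_inv]; congr 1; rw [inv_div]
  have e2 : Real.log ((1-p)/(1-q)) = - Real.log ((1-q)/(1-p)) := by
    rw [← Real.log_inv]; congr 1; rw [inv_div]
  unfold klBin
  rw [e1, e2]
  have hb1 : p * Real.log (q/p) ≤ q - p := by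
    calc p * Real.log (q/p) ≤ p * (q/p - 1) := mul_le_mul_of_nonneg_left h1 (le_of_lt hp)
    _ = q - p := by rw [mul_sub, mul_div_cancel₀ _ (ne_of_gt hp)]; ring
  have hb2 : (1-p) * Real.log ((1-q)/(1-p)) ≤ p - q := by
    calc (1-p) * Real.log ((1-q)/(1-p)) ≤ (1-p) * ((1-q)/(1-p) - 1) :=
          mul_le_mul_of_nonneg_left h2 (by linarith)
    _ = p - q := by rw [mul_sub, mul_div_cancel₀ _ (by linarith : (1:ℝ)-p ≠ 0)]; ring
  nlinarith

lemma klBin_identity {p p' q : ℝ} (hp : 0 < p) (hp1 : p < 1) (hp' : 0 < p') (hp1' : p' < 1)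
    (hq : 0 < q) (hq1 : q < 1) :
    klBin p' q = klBin p q
      + (p' - p) * ((Real.log p - Real.log (1-p)) - (Real.log q - Real.log (1-q)))
      + klBin p' p := by
  rw [klBin_eq hp' hp1' hq hq1, klBin_eq hp hp1 hq hq1, klBin_eq hp' hp1' hp hp1]; ring

lemma xe_identity {g p q : ℝ} (hp : 0 < p) (hp1 : p < 1) (hq : 0 < q) (hq1 : q < 1) :
    xeBin g p = xeBin g q - klBin p q
      + (p - g) * ((Real.log p - Real.log (1-p)) - (Real.log q - Real.log (1-q))) := by
  rw [klBin_eq hp hp1 hq hq1]; unfold xeBin; ring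

lemma conv_mem_Icc {k : ℕ} (w : Fin k → ℝ) (v : Fin k → ℝ) (h0 : ∀ i, 0 ≤ w i)
    (h1 : ∑ i, w i = 1) {lo hi : ℝ} (hv : ∀ i, v i ∈ Set.Icc lo hi) :
    (∑ i, w i * v i) ∈ Set.Icc lo hi := by
  constructor
  · calc lo = ∑ i, w i * lo := by rw [← Finset.sum_mul, h1, one_mul]
    _ ≤ ∑ i, w i * v i := Finset.sum_le_sum (fun i _ => mul_le_mul_of_nonneg_left (hv i).1 (h0 i))
  · calc ∑ i, w i * v i ≤ ∑ i, w i * hi :=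
        Finset.sum_le_sum (fun i _ => mul_le_mul_of_nonneg_left (hv i).2 (h0 i))
    _ = hi := by rw [← Finset.sum_mul, h1, one_mul]

lemma klBin_le_quad {S₁ S₂ p p' : ℝ} (h1 : 0 < S₁) (h2 : 0 < S₂)
    (hp : p ∈ Set.Icc (1/S₁) (1 - 1/S₂)) (hp' : p' ∈ Set.Icc (1/S₁) (1 - 1/S₂)) :
    klBin p' p ≤ (S₁ + S₂) * (p' - p)^2 / 2 := by
  set a := 1/S₁ with ha
  set b := 1 - 1/S₂ with hb
  have ha0 : 0 < a := by rw [ha]; positivity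
  have hb1 : b < 1 := by
    rw [hb]
    have h : 0 < 1/S₂ := by positivity
    linarith
  have hp0 : 0 < p := lt_of_lt_of_le ha0 hp.1
  have hp1 : p < 1 := lt_of_le_of_lt hp.2 hb1
  have hp'0 : 0 < p' := lt_of_lt_of_le ha0 hp'.1
  have hp'1 : p' < 1 := lt_of_le_of_lt hp'.2 hb1
  set F : ℝ → ℝ := fun x => (S₁+S₂)*(x-p)^2/2
      - (x*(Real.log x - Real.log p) + (1-x)*(Real.log (1-x) - Real.log (1-p))) with hF
  have hderF : ∀ x ∈ Set.Ioo (0:ℝ) 1,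
      HasDerivAt F ((S₁+S₂)*(x-p)
        - ((Real.log x - Real.log (1-x)) - (Real.log p - Real.log (1-p)))) x := by
    intro x hx
    have hx0 : x ≠ 0 := ne_of_gt hx.1
    have h1x : (0:ℝ) < 1 - x := by have := hx.2; linarith
    have h1x' : (1:ℝ) - x ≠ 0 := ne_of_gt h1x
    have d1 : HasDerivAt (fun y : ℝ => y*(Real.log y - Real.log p))
        (1*(Real.log x - Real.log p) + x * x⁻¹) x :=
      (hasDerivAt_id x).mul ((Real.hasDerivAt_log hx0).sub_const _)
    have d2a : HasDerivAt (fun y : ℝ => 1 - y) (-1) x := (hasDerivAt_id x).const_sub 1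
    have d2b : HasDerivAt (fun y : ℝ => Real.log (1-y)) ((1-x)⁻¹ * (-1)) x :=
      (Real.hasDerivAt_log h1x').comp x d2a
    have d2 : HasDerivAt (fun y : ℝ => (1-y)*(Real.log (1-y) - Real.log (1-p)))
        ((-1)*(Real.log (1-x) - Real.log (1-p)) + (1-x)*((1-x)⁻¹*(-1))) x :=
      d2a.mul (d2b.sub_const _)
    have d3 : HasDerivAt (fun y : ℝ => (S₁+S₂)*(y-p)^2/2)
        ((S₁+S₂)*((2:ℕ)*(x-p)^1*1)/2) x :=
      ((((hasDerivAt_id x).sub_const p).pow 2).const_mul (S₁+S₂)).div_const 2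
    have := d3.sub (d1.add d2)
    refine this.congr_deriv ?_
    field_simp
    ring
  set ψ : ℝ → ℝ := fun x => (S₁+S₂)*x - (Real.log x - Real.log (1-x)) with hψ
  have hderψ : ∀ x ∈ Set.Ioo (0:ℝ) 1,
      HasDerivAt ψ ((S₁+S₂) - (x⁻¹ + (1-x)⁻¹ * (-1) * (-1))) x := by
    intro x hx
    have hx0 : x ≠ 0 := ne_of_gt hx.1
    have h1x : (0:ℝ) < 1 - x := by have := hx.2; linarith
    have h1x' : (1:ℝ) - x ≠ 0 := ne_of_gt h1x
    have d2a : HasDerivAt (fun y : ℝ => 1 - y) (-1) x := (hasDerivAt_id x).const_sub 1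
    have d2b : HasDerivAt (fun y : ℝ => Real.log (1-y)) ((1-x)⁻¹ * (-1)) x :=
      (Real.hasDerivAt_log h1x').comp x d2a
    have d0 : HasDerivAt (fun y : ℝ => (S₁+S₂)*y) ((S₁+S₂)*1) x :=
      (hasDerivAt_id x).const_mul _
    have := d0.sub ((Real.hasDerivAt_log hx0).sub d2b)
    refine this.congr_deriv ?_
    ring
  have hsubIoo : Set.Icc a b ⊆ Set.Ioo (0:ℝ) 1 := fun y hy =>
    ⟨lt_of_lt_of_le ha0 hy.1, lt_of_le_of_lt hy.2 hb1⟩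
  have hψmono : MonotoneOn ψ (Set.Icc a b) := by
    apply monotoneOn_of_deriv_nonneg (convex_Icc a b)
    · exact fun y hy => ((hderψ y (hsubIoo hy)).differentiableAt.continuousAt).continuousWithinAt
    · rw [interior_Icc]
      exact fun y hy =>
        ((hderψ y (hsubIoo (Set.Ioo_subset_Icc_self hy))).differentiableAt.differentiableWithinAt)
    · intro y hy
      rw [interior_Icc] at hy
      have hy' := hsubIoo (Set.Ioo_subset_Icc_self hy)
      rw [(hderψ y hy').deriv]
      have e1 : y⁻¹ ≤ S₁ := by
        have h := inv_anti₀ ha0 hy.1.le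
        rwa [ha, one_div, inv_inv] at h
      have e2 : (1-y)⁻¹ ≤ S₂ := by
        have hby : 1 - b ≤ 1 - y := by linarith [hy.2]
        have h1b : (0:ℝ) < 1 - b := by linarith
        have h := inv_anti₀ h1b hby
        rw [hb] at h
        simp only [sub_sub_cancel, one_div, inv_inv] at h
        exact h
      nlinarith
  have hFab : ∀ x ∈ Set.Icc a b, 0 ≤ F x → True := fun _ _ _ => trivial
  have hFp : F p = 0 := by simp [hF]
  have hkey : 0 ≤ F p' := by
    rcases le_total p p' with hpp' | hp'p
    · have hmono : MonotoneOn F (Set.Icc p b) := by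
        apply monotoneOn_of_deriv_nonneg (convex_Icc p b)
        · intro y hy
          have hy' : y ∈ Set.Icc a b := ⟨le_trans hp.1 hy.1, hy.2⟩
          exact ((hderF y (hsubIoo hy')).differentiableAt.continuousAt).continuousWithinAt
        · rw [interior_Icc]
          intro y hy
          have hy' : y ∈ Set.Icc a b := ⟨le_trans hp.1 hy.1.le, hy.2.le⟩
          exact (hderF y (hsubIoo hy')).differentiableAt.differentiableWithinAt
        · intro y hy
          rw [interior_Icc] at hy
          have hy' : y ∈ Set.Icc a b := ⟨le_trans hp.1 hy.1.le, hy.2.le⟩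
          rw [(hderF y (hsubIoo hy')).deriv]
          have := hψmono hp hy' (le_trans (le_refl p) hy.1.le)
          simp only [hψ] at this
          linarith
      have := hmono ⟨le_refl p, hp.2⟩ ⟨hpp', hp'.2⟩ hpp'
      rw [hFp] at this; exact this
    · have hanti : AntitoneOn F (Set.Icc a p) := by
        apply antitoneOn_of_deriv_nonpos (convex_Icc a p)
        · intro y hy
          have hy' : y ∈ Set.Icc a b := ⟨hy.1, le_trans hy.2 hp.2⟩
          exact ((hderF y (hsubIoo hy')).differentiableAt.continuousAt).continuousWithinAt
        · rw [interior_Icc]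
          intro y hy
          have hy' : y ∈ Set.Icc a b := ⟨hy.1.le, le_trans hy.2.le hp.2⟩
          exact (hderF y (hsubIoo hy')).differentiableAt.differentiableWithinAt
        · intro y hy
          rw [interior_Icc] at hy
          have hy' : y ∈ Set.Icc a b := ⟨hy.1.le, le_trans hy.2.le hp.2⟩
          rw [(hderF y (hsubIoo hy')).deriv]
          have := hψmono hy' hp hy.2.le
          simp only [hψ] at this
          linarith
      have := hanti ⟨hp'.1, hp'p⟩ ⟨hp.1, le_refl p⟩ hp'p
      rw [hFp] at this; exact this
  rw [klBin_eq hp'0 hp'1 hp0 hp1]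
  simp only [hF] at hkey
  linarith

set_option maxHeartbeats 4000000

/-- **Cross-Entropy Misfit-Gain Inequality over `co^k 𝓕`** (binary classification,
non-convex strong class, with regularization).  `s₁ x = sup_{f ∈ 𝓕} 1/f(h_s(x))` and
`s₂ x = sup_{f ∈ 𝓕} 1/(1 − f(h_s(x)))` exist (this is the finiteness of `ρ₁, ρ₂`). -/
theorem xe_misfit_gain_cok
    {ds dw : ℕ} {𝒳 : Type*} [Fintype 𝒳]
    (μ : 𝒳 → ℝ) (hμpos : ∀ x, 0 < μ x) (hμsum : ∑ x, μ x = 1)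
    (hs : 𝒳 → Fin ds → ℝ) (hw : 𝒳 → Fin dw → ℝ)
    (g : 𝒳 → ℝ) (hg : ∀ x, g x ∈ Set.Ioo (0:ℝ) 1)
    (fw : (Fin dw → ℝ) → ℝ) (hfw : ∀ v, fw v ∈ Set.Ioo (0:ℝ) 1)
    (𝓕 : Set ((Fin ds → ℝ) → ℝ))
    (h𝓕mem : ∀ f ∈ 𝓕, ∀ v, f v ∈ Set.Ioo (0:ℝ) 1)
    (hreal : ∃ fstar ∈ 𝓕, ∀ x, g x = fstar (hs x))
    (s₁ s₂ : 𝒳 → ℝ)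
    (hsup₁ : ∀ x, IsLUB ((fun f : (Fin ds → ℝ) → ℝ => 1 / f (hs x)) '' 𝓕) (s₁ x))
    (hsup₂ : ∀ x, IsLUB ((fun f : (Fin ds → ℝ) → ℝ => 1 / (1 - f (hs x))) '' 𝓕) (s₂ x))
    (ρ₁ ρ₂ : ℝ)
    (hρ₁ : ρ₁ = ∑ x, μ x * s₁ x)
    (hρ₂ : ρ₂ = ∑ x, μ x * s₂ x) :
    ∀ k : ℕ, 0 < k → ∀ ε > 0, ∃ δ > 0, ∀ fs ∈ convComb k 𝓕,
      (∑ x, μ x * klBin (fs (hs x)) (fw (hw x))) ≤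
        (⨅ f : convComb k 𝓕,
          ∑ x, μ x * klBin ((f : (Fin ds → ℝ) → ℝ) (hs x)) (fw (hw x))) + δ →
      ∑ x, μ x * xeBin (g x) (fs (hs x)) ≤
        ∑ x, μ x * xeBin (g x) (fw (hw x))
          - ∑ x, μ x * klBin (fs (hs x)) (fw (hw x))
          + (ρ₁ + ρ₂) / (8 * k) + (max ρ₁ ρ₂) ^ ((3:ℝ)/2) * Real.sqrt (2 / (4 * k)) + ε := by
  intro k hk ε hε
  obtain ⟨fst, hfstF, hgfst⟩ := hreal
  have hK1 : (1:ℝ) ≤ (k:ℝ) := by exact_mod_cast hk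
  have hK0 : (0:ℝ) < (k:ℝ) := by linarith
  have hs1le : ∀ f ∈ 𝓕, ∀ x, 1 / f (hs x) ≤ s₁ x := fun f hf x =>
    (hsup₁ x).1 ⟨f, hf, rfl⟩
  have hs2le : ∀ f ∈ 𝓕, ∀ x, 1 / (1 - f (hs x)) ≤ s₂ x := fun f hf x =>
    (hsup₂ x).1 ⟨f, hf, rfl⟩
  have hs1pos : ∀ x, 0 < s₁ x := by
    intro x
    have h := hs1le fst hfstF x
    have h0 : 0 < fst (hs x) := (h𝓕mem fst hfstF (hs x)).1
    have : 0 < 1 / fst (hs x) := by positivity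
    linarith
  have hs2pos : ∀ x, 0 < s₂ x := by
    intro x
    have h := hs2le fst hfstF x
    have h1 : fst (hs x) < 1 := (h𝓕mem fst hfstF (hs x)).2
    have : 0 < 1 / (1 - fst (hs x)) := by
      apply div_pos one_pos; linarith
    linarith
  have hboxF : ∀ f ∈ 𝓕, ∀ x, f (hs x) ∈ Set.Icc (1/s₁ x) (1 - 1/s₂ x) := by
    intro f hf x
    have h1 := hs1le f hf x
    have h2 := hs2le f hf x
    have hf0 : 0 < f (hs x) := (h𝓕mem f hf (hs x)).1
    have hf1 : f (hs x) < 1 := (h𝓕mem f hf (hs x)).2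
    constructor
    · rw [div_le_iff₀ hf0] at h1
      rw [div_le_iff₀ (hs1pos x)]
      nlinarith
    · rw [div_le_iff₀ (by linarith : (0:ℝ) < 1 - f (hs x))] at h2
      have : 1/s₂ x ≤ 1 - f (hs x) := by
        rw [div_le_iff₀ (hs2pos x)]
        nlinarith
      linarith
  have hboxIoo : ∀ x, ∀ r ∈ Set.Icc (1/s₁ x) (1 - 1/s₂ x), 0 < r ∧ r < 1 := by
    intro x r hr
    have e1 : (0:ℝ) < 1/s₁ x := div_pos one_pos (hs1pos x)
    have e2 : (0:ℝ) < 1/s₂ x := div_pos one_pos (hs2pos x)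
    exact ⟨lt_of_lt_of_le e1 hr.1, by linarith [hr.2]⟩
  have hboxC : ∀ fc ∈ convComb k 𝓕, ∀ x, fc (hs x) ∈ Set.Icc (1/s₁ x) (1 - 1/s₂ x) := by
    rintro fc ⟨w', z', h0, h1, hz', rfl⟩ x
    have e : (∑ i, w' i • z' i) (hs x) = ∑ i, w' i * z' i (hs x) := by
      simp [Finset.sum_apply, Pi.smul_apply, smul_eq_mul]
    rw [e]
    exact conv_mem_Icc w' _ h0 h1 (fun i => hboxF (z' i) (hz' i) x)
  have hS4 : ∀ x, 4 ≤ s₁ x + s₂ x := by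
    intro x
    have h1 := hs1le fst hfstF x
    have h2 := hs2le fst hfstF x
    rw [← hgfst x] at h1 h2
    have hg0 := (hg x).1
    have hg1 := (hg x).2
    have h4 : 4 ≤ 1/(g x) + 1/(1 - g x) := by
      rw [div_add_div _ _ (ne_of_gt hg0) (by linarith : (1:ℝ) - g x ≠ 0),
        le_div_iff₀ (by nlinarith : (0:ℝ) < g x * (1 - g x))]
      nlinarith [sq_nonneg (2 * g x - 1)]
    linarith
  have hρ4 : 4 ≤ ρ₁ + ρ₂ := by
    rw [hρ₁, hρ₂, ← Finset.sum_add_distrib]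
    have e : ∑ x, μ x * 4 = (4:ℝ) := by
      rw [← Finset.sum_mul, hμsum, one_mul]
    calc (4:ℝ) = ∑ x, μ x * 4 := e.symm
    _ ≤ ∑ x, (μ x * s₁ x + μ x * s₂ x) := by
        apply Finset.sum_le_sum
        intro x _
        calc μ x * 4 ≤ μ x * (s₁ x + s₂ x) :=
              mul_le_mul_of_nonneg_left (hS4 x) (hμpos x).le
        _ = μ x * s₁ x + μ x * s₂ x := by ring
  have hρpos : (0:ℝ) < ρ₁ + ρ₂ := by linarith
  set t := min 1 (ε/(2*(ρ₁+ρ₂))) with ht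
  have ht0 : 0 < t := lt_min one_pos (by positivity)
  have ht1 : t ≤ 1 := min_le_left _ _
  have h1t : (0:ℝ) ≤ 1 - t := by linarith
  have htρ : t * (ρ₁+ρ₂) ≤ ε/2 := by
    calc t * (ρ₁+ρ₂) ≤ (ε/(2*(ρ₁+ρ₂))) * (ρ₁+ρ₂) :=
        mul_le_mul_of_nonneg_right (min_le_right _ _) hρpos.le
    _ = ε/2 := by field_simp
  clear_value t
  refine ⟨t*ε/8, div_pos (mul_pos ht0 hε) (by norm_num), ?_⟩
  intro fs hfs hopt
  have hfsmem : fs ∈ convComb k 𝓕 := hfs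
  obtain ⟨w, z, hw0, hw1, hzF, hfseq⟩ := hfs
  -- minimum weight component
  have hex : ∃ i : Fin k, w i ≤ 1/(k:ℝ) := by
    by_contra hcon
    push_neg at hcon
    have hne : (Finset.univ : Finset (Fin k)).Nonempty := ⟨⟨0, hk⟩, Finset.mem_univ _⟩
    have h1 : (1:ℝ) < 1 := by
      calc (1:ℝ) = ∑ _i : Fin k, (1:ℝ)/(k:ℝ) := by
            rw [Finset.sum_const, Finset.card_univ, Fintype.card_fin, nsmul_eq_mul]
            field_simp
      _ < ∑ i, w i := Finset.sum_lt_sum_of_nonempty hne (fun i _ => hcon i)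
      _ = 1 := hw1
    exact lt_irrefl 1 h1
  obtain ⟨i₀, hi₀⟩ := hex
  have hc0 : 0 ≤ w i₀ := hw0 i₀
  have hc1 : w i₀ ≤ 1 := le_trans hi₀ (by rw [div_le_one hK0]; exact hK1)
  have happ : ∀ (w' : Fin k → ℝ) (z' : Fin k → (Fin ds → ℝ) → ℝ) (v : Fin ds → ℝ),
      (∑ i, w' i • z' i) v = ∑ i, w' i * z' i v := by
    intro w' z' v
    simp [Finset.sum_apply, Pi.smul_apply, smul_eq_mul]
  have hPval : ∀ x, fs (hs x) = ∑ i, w i * z i (hs x) := fun x => by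
    rw [hfseq]; exact happ w z (hs x)
  -- linearization direction and key quantities
  set D : 𝒳 → ℝ := fun x =>
    (Real.log (fs (hs x)) - Real.log (1 - fs (hs x)))
      - (Real.log (fw (hw x)) - Real.log (1 - fw (hw x))) with hD
  set Q := ∑ x, μ x * ((fs (hs x) - g x) * D x) with hQ
  set EB := ∑ x, μ x * ((z i₀ (hs x) - fs (hs x)) * D x) with hEB
  clear_value D Q EB
  have hbdd : BddBelow (Set.range fun f : convComb k 𝓕 =>
      ∑ x, μ x * klBin ((f : (Fin ds → ℝ) → ℝ) (hs x)) (fw (hw x))) := by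
    refine ⟨0, ?_⟩
    rintro v ⟨f, rfl⟩
    apply Finset.sum_nonneg
    intro x _
    have h01 := hboxIoo x _ (hboxC f.1 f.2 x)
    exact mul_nonneg (hμpos x).le
      (klBin_nonneg h01.1 h01.2 (hfw (hw x)).1 (hfw (hw x)).2)
  have hinf : ∀ fc ∈ convComb k 𝓕,
      (∑ x, μ x * klBin (fs (hs x)) (fw (hw x))) - t*ε/8
        ≤ ∑ x, μ x * klBin (fc (hs x)) (fw (hw x)) := by
    intro fc hfc
    have h : (⨅ f : convComb k 𝓕,
        ∑ x, μ x * klBin ((f : (Fin ds → ℝ) → ℝ) (hs x)) (fw (hw x)))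
        ≤ ∑ x, μ x * klBin (fc (hs x)) (fw (hw x)) :=
      ciInf_le hbdd (⟨fc, hfc⟩ : convComb k 𝓕)
    linarith [hopt]
  have hkey : ∀ fc ∈ convComb k 𝓕,
      -(t*ε/8) ≤ (∑ x, μ x * ((fc (hs x) - fs (hs x)) * D x))
        + ∑ x, μ x * ((s₁ x + s₂ x) * (fc (hs x) - fs (hs x))^2 / 2) := by
    intro fc hfc
    have hpt : ∀ x ∈ (Finset.univ : Finset 𝒳), μ x * klBin (fc (hs x)) (fw (hw x)) ≤
        μ x * klBin (fs (hs x)) (fw (hw x)) + (μ x * ((fc (hs x) - fs (hs x)) * D x)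
          + μ x * ((s₁ x + s₂ x) * (fc (hs x) - fs (hs x))^2 / 2)) := by
      intro x _
      have hbP := hboxC fs hfsmem x
      have hP01 := hboxIoo x _ hbP
      have hbc := hboxC fc hfc x
      have hc01 := hboxIoo x _ hbc
      have hid := klBin_identity hP01.1 hP01.2 hc01.1 hc01.2 (hfw (hw x)).1 (hfw (hw x)).2
      have hqd := klBin_le_quad (hs1pos x) (hs2pos x) hbP hbc
      have hmul := mul_le_mul_of_nonneg_left hqd (hμpos x).le
      have hideq : μ x * klBin (fc (hs x)) (fw (hw x))
          = μ x * klBin (fs (hs x)) (fw (hw x)) + μ x * ((fc (hs x) - fs (hs x)) * D x)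
            + μ x * klBin (fc (hs x)) (fs (hs x)) := by
        rw [hid, hD]
        ring
      linarith [hideq, hmul]
    have hsum := Finset.sum_le_sum hpt
    rw [Finset.sum_add_distrib, Finset.sum_add_distrib] at hsum
    have hlow := hinf fc hfc
    linarith
  have hsumS : ∀ r : ℝ, ∑ x, μ x * ((s₁ x + s₂ x) * r / 2) = r * (ρ₁+ρ₂)/2 := by
    intro r
    calc ∑ x, μ x * ((s₁ x + s₂ x) * r / 2)
        = ∑ x, (μ x * s₁ x + μ x * s₂ x) * (r/2) := by
          apply Finset.sum_congr rfl; intro x _; ring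
    _ = (∑ x, (μ x * s₁ x + μ x * s₂ x)) * (r/2) := by rw [Finset.sum_mul]
    _ = ((∑ x, μ x * s₁ x) + ∑ x, μ x * s₂ x) * (r/2) := by rw [Finset.sum_add_distrib]
    _ = r * (ρ₁+ρ₂)/2 := by rw [← hρ₁, ← hρ₂]; ring
  -- B comparison: slide mass towards the i₀ component
  have hfBmem : (∑ i, ((1-t)*w i + if i = i₀ then t else 0) • z i) ∈ convComb k 𝓕 := by
    refine ⟨_, z, ?_, ?_, hzF, rfl⟩
    · intro i
      have := hw0 i
      split
      · nlinarith
      · nlinarith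
    · rw [Finset.sum_add_distrib, ← Finset.mul_sum, hw1,
        Finset.sum_ite_eq' Finset.univ i₀ (fun _ => t)]
      simp
  have hvB : ∀ x, (∑ i, ((1-t)*w i + if i = i₀ then t else 0) • z i) (hs x)
      = fs (hs x) + t * (z i₀ (hs x) - fs (hs x)) := by
    intro x
    rw [happ]
    have e : ∀ i ∈ (Finset.univ : Finset (Fin k)),
        ((1-t)*w i + if i = i₀ then t else 0) * z i (hs x)
        = (1-t)*(w i * z i (hs x)) + (if i = i₀ then t * z i₀ (hs x) else 0) := by
      intro i _
      by_cases h : i = i₀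
      · rw [if_pos h, if_pos h, h]; ring
      · rw [if_neg h, if_neg h]; ring
    rw [Finset.sum_congr rfl e, Finset.sum_add_distrib, ← Finset.mul_sum,
      Finset.sum_ite_eq' Finset.univ i₀ (fun _ => t * z i₀ (hs x))]
    simp only [Finset.mem_univ, if_true]
    rw [← hPval x]
    ring
  have hBfinal : -(t*ε/8) ≤ t*EB + t^2 * (ρ₁+ρ₂)/2 := by
    have hB := hkey _ hfBmem
    have hlinB : (∑ x, μ x * (((∑ i, ((1-t)*w i + if i = i₀ then t else 0) • z i) (hs x)
        - fs (hs x)) * D x)) = t * EB := by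
      rw [hEB, Finset.mul_sum]
      apply Finset.sum_congr rfl
      intro x _
      rw [hvB x]
      ring
    have hquadB : ∑ x, μ x * ((s₁ x + s₂ x) *
        ((∑ i, ((1-t)*w i + if i = i₀ then t else 0) • z i) (hs x) - fs (hs x))^2 / 2)
        ≤ t^2 * (ρ₁+ρ₂)/2 := by
      have hstep : ∀ x ∈ (Finset.univ : Finset 𝒳),
          μ x * ((s₁ x + s₂ x) *
            ((∑ i, ((1-t)*w i + if i = i₀ then t else 0) • z i) (hs x) - fs (hs x))^2 / 2)
          ≤ μ x * ((s₁ x + s₂ x) * t^2 / 2) := by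
        intro x _
        have hU := hboxIoo x _ (hboxF (z i₀) (hzF i₀) x)
        have hP01 := hboxIoo x _ (hboxC fs hfsmem x)
        have hsq : ((∑ i, ((1-t)*w i + if i = i₀ then t else 0) • z i) (hs x) - fs (hs x))^2
            ≤ t^2 := by
          rw [hvB x]
          have e2 : (fs (hs x) + t * (z i₀ (hs x) - fs (hs x)) - fs (hs x))^2
              = t^2 * (z i₀ (hs x) - fs (hs x))^2 := by ring
          rw [e2]
          have hd1 : (0:ℝ) ≤ 1 - (z i₀ (hs x) - fs (hs x)) := by nlinarith [hU.2, hP01.1]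
          have hd2 : (0:ℝ) ≤ 1 + (z i₀ (hs x) - fs (hs x)) := by nlinarith [hU.1, hP01.2]
          nlinarith [mul_nonneg hd1 hd2, sq_nonneg t]
        apply mul_le_mul_of_nonneg_left _ (hμpos x).le
        have hSpos : (0:ℝ) ≤ s₁ x + s₂ x := by linarith [hs1pos x, hs2pos x]
        nlinarith [hsq]
      calc ∑ x, μ x * ((s₁ x + s₂ x) *
            ((∑ i, ((1-t)*w i + if i = i₀ then t else 0) • z i) (hs x) - fs (hs x))^2 / 2)
          ≤ ∑ x, μ x * ((s₁ x + s₂ x) * t^2 / 2) := Finset.sum_le_sum hstep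
      _ = t^2 * (ρ₁+ρ₂)/2 := hsumS (t^2)
    rw [hlinB] at hB
    linarith
  -- A comparison: swap the i₀ component for fstar and slide towards it
  have hfAmem : (∑ i, (if i = i₀ then t + (1-t)*(w i₀) else (1-t)*w i)
      • (if i = i₀ then fst else z i)) ∈ convComb k 𝓕 := by
    refine ⟨_, _, ?_, ?_, ?_, rfl⟩
    · intro i
      by_cases h : i = i₀
      · simp only [if_pos h]; nlinarith [hc0]
      · simp only [if_neg h]; nlinarith [hw0 i]
    · have e : ∀ i ∈ (Finset.univ : Finset (Fin k)),
          (if i = i₀ then t + (1-t)*(w i₀) else (1-t)*w i)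
          = (1-t)*w i + (if i = i₀ then t + (1-t)*(w i₀) - (1-t)*w i₀ else 0) := by
        intro i _
        by_cases h : i = i₀
        · rw [if_pos h, if_pos h, h]; ring
        · rw [if_neg h, if_neg h]; ring
      rw [Finset.sum_congr rfl e, Finset.sum_add_distrib, ← Finset.mul_sum, hw1,
        Finset.sum_ite_eq' Finset.univ i₀ (fun _ => t + (1-t)*(w i₀) - (1-t)*w i₀)]
      simp only [Finset.mem_univ, if_true]
      ring
    · intro i
      by_cases h : i = i₀
      · simp only [if_pos h]; exact hfstF
      · simp only [if_neg h]; exact hzF i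
  have hvA : ∀ x, (∑ i, (if i = i₀ then t + (1-t)*(w i₀) else (1-t)*w i)
      • (if i = i₀ then fst else z i)) (hs x)
      = fs (hs x) + (t*(g x - fs (hs x)) + (1-t)*(w i₀)*(g x - z i₀ (hs x))) := by
    intro x
    rw [happ]
    have e : ∀ i ∈ (Finset.univ : Finset (Fin k)),
        (if i = i₀ then t + (1-t)*(w i₀) else (1-t)*w i) * (if i = i₀ then fst else z i) (hs x)
        = (1-t)*(w i * z i (hs x))
          + (if i = i₀ then (t + (1-t)*(w i₀)) * fst (hs x) - (1-t)*(w i₀ * z i₀ (hs x)) else 0) := by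
      intro i _
      by_cases h : i = i₀
      · rw [if_pos h, if_pos h, if_pos h, h]; ring
      · rw [if_neg h, if_neg h, if_neg h]; ring
    rw [Finset.sum_congr rfl e, Finset.sum_add_distrib, ← Finset.mul_sum,
      Finset.sum_ite_eq' Finset.univ i₀
        (fun _ => (t + (1-t)*(w i₀)) * fst (hs x) - (1-t)*(w i₀ * z i₀ (hs x)))]
    simp only [Finset.mem_univ, if_true]
    rw [← hPval x, ← hgfst x]
    ring
  have hAfinal : -(t*ε/8) ≤ -((t + (1-t)*(w i₀))*Q) - (1-t)*(w i₀)*EB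
      + (t + (1-t)*(w i₀))^2 * (ρ₁+ρ₂)/2 := by
    have hA := hkey _ hfAmem
    have hlinA : (∑ x, μ x * (((∑ i, (if i = i₀ then t + (1-t)*(w i₀) else (1-t)*w i)
        • (if i = i₀ then fst else z i)) (hs x) - fs (hs x)) * D x))
        = -((t + (1-t)*(w i₀))*Q) - (1-t)*(w i₀)*EB := by
      have e : ∀ x ∈ (Finset.univ : Finset 𝒳),
          μ x * (((∑ i, (if i = i₀ then t + (1-t)*(w i₀) else (1-t)*w i)
            • (if i = i₀ then fst else z i)) (hs x) - fs (hs x)) * D x)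
          = (-(t + (1-t)*(w i₀))) * (μ x * ((fs (hs x) - g x) * D x))
            + (-((1-t)*(w i₀))) * (μ x * ((z i₀ (hs x) - fs (hs x)) * D x)) := by
        intro x _
        rw [hvA x]
        ring
      rw [Finset.sum_congr rfl e, Finset.sum_add_distrib, ← Finset.mul_sum, ← Finset.mul_sum,
        ← hQ, ← hEB]
      ring
    have hquadA : ∑ x, μ x * ((s₁ x + s₂ x) *
        ((∑ i, (if i = i₀ then t + (1-t)*(w i₀) else (1-t)*w i)
          • (if i = i₀ then fst else z i)) (hs x) - fs (hs x))^2 / 2)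
        ≤ (t + (1-t)*(w i₀))^2 * (ρ₁+ρ₂)/2 := by
      have hstep : ∀ x ∈ (Finset.univ : Finset 𝒳),
          μ x * ((s₁ x + s₂ x) *
            ((∑ i, (if i = i₀ then t + (1-t)*(w i₀) else (1-t)*w i)
              • (if i = i₀ then fst else z i)) (hs x) - fs (hs x))^2 / 2)
          ≤ μ x * ((s₁ x + s₂ x) * (t + (1-t)*(w i₀))^2 / 2) := by
        intro x _
        have hU := hboxIoo x _ (hboxF (z i₀) (hzF i₀) x)
        have hP01 := hboxIoo x _ (hboxC fs hfsmem x)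
        have hG01 := hg x
        have hsq : ((∑ i, (if i = i₀ then t + (1-t)*(w i₀) else (1-t)*w i)
            • (if i = i₀ then fst else z i)) (hs x) - fs (hs x))^2
            ≤ (t + (1-t)*(w i₀))^2 := by
          rw [hvA x]
          have e2 : (fs (hs x) + (t*(g x - fs (hs x)) + (1-t)*(w i₀)*(g x - z i₀ (hs x)))
              - fs (hs x)) = t*(g x - fs (hs x)) + (1-t)*(w i₀)*(g x - z i₀ (hs x)) := by ring
          rw [e2]
          have habs : |t*(g x - fs (hs x)) + (1-t)*(w i₀)*(g x - z i₀ (hs x))|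
              ≤ t + (1-t)*(w i₀) := by
            have h1 : |g x - fs (hs x)| ≤ 1 := by
              rw [abs_le]; constructor <;> [nlinarith [hG01.1, hP01.2]; nlinarith [hG01.2, hP01.1]]
            have h2 : |g x - z i₀ (hs x)| ≤ 1 := by
              rw [abs_le]; constructor <;> [nlinarith [hG01.1, hU.2]; nlinarith [hG01.2, hU.1]]
            calc |t*(g x - fs (hs x)) + (1-t)*(w i₀)*(g x - z i₀ (hs x))|
                ≤ |t*(g x - fs (hs x))| + |(1-t)*(w i₀)*(g x - z i₀ (hs x))| := abs_add_le _ _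
            _ = t * |g x - fs (hs x)| + (1-t)*(w i₀) * |g x - z i₀ (hs x)| := by
                rw [abs_mul, abs_mul, abs_of_nonneg ht0.le,
                  abs_of_nonneg (mul_nonneg h1t hc0)]
            _ ≤ t * 1 + (1-t)*(w i₀) * 1 :=
                add_le_add (mul_le_mul_of_nonneg_left h1 ht0.le)
                  (mul_le_mul_of_nonneg_left h2 (mul_nonneg h1t hc0))
            _ = t + (1-t)*(w i₀) := by ring
          calc (t*(g x - fs (hs x)) + (1-t)*(w i₀)*(g x - z i₀ (hs x)))^2
              = |t*(g x - fs (hs x)) + (1-t)*(w i₀)*(g x - z i₀ (hs x))|^2 := (sq_abs _).symm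
          _ ≤ (t + (1-t)*(w i₀))^2 := by
              apply pow_le_pow_left₀ (abs_nonneg _) habs
        apply mul_le_mul_of_nonneg_left _ (hμpos x).le
        have hSpos : (0:ℝ) ≤ s₁ x + s₂ x := by linarith [hs1pos x, hs2pos x]
        nlinarith [hsq]
      calc ∑ x, μ x * ((s₁ x + s₂ x) *
            ((∑ i, (if i = i₀ then t + (1-t)*(w i₀) else (1-t)*w i)
              • (if i = i₀ then fst else z i)) (hs x) - fs (hs x))^2 / 2)
          ≤ ∑ x, μ x * ((s₁ x + s₂ x) * (t + (1-t)*(w i₀))^2 / 2) := Finset.sum_le_sum hstep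
      _ = (t + (1-t)*(w i₀))^2 * (ρ₁+ρ₂)/2 := hsumS _
    rw [hlinA] at hA
    linarith
  -- arithmetic: extract the bound on Q
  clear hopt hinf hkey hbdd hfBmem hfAmem hvB hvA hsumS happ hPval hfseq hEB hzF hw1 hw0
  have hQbound : Q ≤ (1/(k:ℝ)) * (ρ₁+ρ₂)/2 + 3*ε/4 := by
    set τ := t + (1-t)*(w i₀) with hτ
    have hτt : t ≤ τ := by nlinarith [mul_nonneg h1t hc0]
    have hτ0 : 0 < τ := lt_of_lt_of_le ht0 hτt
    have hτtc : τ ≤ t + w i₀ := by nlinarith [mul_nonneg ht0.le hc0]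
    have hτbc : (1-t)*(w i₀) ≤ τ := by nlinarith [ht0]
    set X := ε/8 + t*(ρ₁+ρ₂)/2 with hX
    have hX0 : 0 ≤ X := by
      rw [hX]
      have : 0 ≤ t*(ρ₁+ρ₂) := mul_nonneg ht0.le hρpos.le
      linarith
    clear_value τ X
    have hEBlow : -EB ≤ X := by
      have h1 : t * (-EB) ≤ t * X := by
        have e : t * X = t*ε/8 + t^2*(ρ₁+ρ₂)/2 := by rw [hX]; ring
        nlinarith [hBfinal]
      exact le_of_mul_le_mul_left h1 ht0
    have hstep2 : τ*Q ≤ t*ε/8 + (1-t)*(w i₀)*X + τ^2*(ρ₁+ρ₂)/2 := by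
      have h2 : -((1-t)*(w i₀)*EB) ≤ (1-t)*(w i₀)*X := by
        have := mul_le_mul_of_nonneg_left hEBlow (mul_nonneg h1t hc0)
        nlinarith [this]
      nlinarith [hAfinal]
    have hstep3 : τ*Q ≤ τ*(ε/8 + X + (t + w i₀)*(ρ₁+ρ₂)/2) := by
      have b1 : t*ε/8 ≤ τ*(ε/8) := by nlinarith [hτt, hε.le]
      have b2 : (1-t)*(w i₀)*X ≤ τ*X := mul_le_mul_of_nonneg_right hτbc hX0
      have b3 : τ^2*(ρ₁+ρ₂)/2 ≤ τ*((t + w i₀)*(ρ₁+ρ₂)/2) := by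
        nlinarith [mul_nonneg (mul_nonneg hτ0.le (sub_nonneg.mpr hτtc)) hρpos.le]
      nlinarith [hstep2]
    have hstep4 : Q ≤ ε/8 + X + (t + w i₀)*(ρ₁+ρ₂)/2 :=
      le_of_mul_le_mul_left (by nlinarith [hstep3]) hτ0
    have hc_bound : w i₀ * (ρ₁+ρ₂) ≤ (1/(k:ℝ)) * (ρ₁+ρ₂) :=
      mul_le_mul_of_nonneg_right hi₀ hρpos.le
    rw [hX] at hstep4
    nlinarith [htρ]
  -- the gap term dominates (ρ₁+ρ₂)/(2k)
  have hM2 : 2 ≤ max ρ₁ ρ₂ := by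
    have h1 := le_max_left ρ₁ ρ₂
    have h2 := le_max_right ρ₁ ρ₂
    linarith
  have hM0 : (0:ℝ) < max ρ₁ ρ₂ := by linarith
  have hgap : (1/(k:ℝ)) * (ρ₁+ρ₂)/2
      ≤ (ρ₁ + ρ₂) / (8 * (k:ℝ)) + (max ρ₁ ρ₂) ^ ((3:ℝ)/2) * Real.sqrt (2 / (4 * (k:ℝ))) := by
    have hrpow : (max ρ₁ ρ₂) ^ ((3:ℝ)/2) = (max ρ₁ ρ₂) * Real.sqrt (max ρ₁ ρ₂) := by
      rw [show ((3:ℝ)/2) = 1 + 1/2 by norm_num, Real.rpow_add hM0, Real.rpow_one,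
        ← Real.sqrt_eq_rpow]
    have hsq2 : Real.sqrt 2 ≤ Real.sqrt (max ρ₁ ρ₂) := Real.sqrt_le_sqrt hM2
    have hsq2pos : (0:ℝ) < Real.sqrt 2 := Real.sqrt_pos.mpr (by norm_num)
    have hsqrtlow : Real.sqrt (1/(2*(k:ℝ)^2)) ≤ Real.sqrt (2/(4*(k:ℝ))) := by
      apply Real.sqrt_le_sqrt
      rw [div_le_div_iff₀ (by positivity) (by positivity)]
      nlinarith [hK1]
    have heq : Real.sqrt (1/(2*(k:ℝ)^2)) = 1/(Real.sqrt 2 * (k:ℝ)) := by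
      rw [one_div, Real.sqrt_inv, Real.sqrt_mul (by norm_num : (0:ℝ) ≤ 2),
        Real.sqrt_sq hK0.le, one_div]
    have hchain : (max ρ₁ ρ₂)/(k:ℝ)
        ≤ (max ρ₁ ρ₂) ^ ((3:ℝ)/2) * Real.sqrt (2/(4*(k:ℝ))) := by
      rw [hrpow]
      calc (max ρ₁ ρ₂)/(k:ℝ)
          = (max ρ₁ ρ₂) * Real.sqrt 2 * (1/(Real.sqrt 2 * (k:ℝ))) := by
            field_simp
      _ = (max ρ₁ ρ₂) * Real.sqrt 2 * Real.sqrt (1/(2*(k:ℝ)^2)) := by rw [heq]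
      _ ≤ (max ρ₁ ρ₂) * Real.sqrt (max ρ₁ ρ₂) * Real.sqrt (2/(4*(k:ℝ))) := by
          apply mul_le_mul (mul_le_mul_of_nonneg_left hsq2 hM0.le) hsqrtlow
            (Real.sqrt_nonneg _) (by positivity)
    have e1 : (1/(k:ℝ))*(ρ₁+ρ₂)/2 = (ρ₁+ρ₂)/(8*(k:ℝ)) + (3/8)*((ρ₁+ρ₂)/(k:ℝ)) := by
      field_simp
      ring
    have e2 : (3/8)*((ρ₁+ρ₂)/(k:ℝ)) ≤ (max ρ₁ ρ₂)/(k:ℝ) := by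
      rw [show (3:ℝ)/8*((ρ₁+ρ₂)/(k:ℝ)) = (3/8*(ρ₁+ρ₂))/(k:ℝ) by ring]
      gcongr
      linarith [le_max_left ρ₁ ρ₂, le_max_right ρ₁ ρ₂]
    rw [e1]
    linarith
  -- final cross-entropy identity and conclusion
  have hXE : ∑ x, μ x * xeBin (g x) (fs (hs x))
      = ∑ x, μ x * xeBin (g x) (fw (hw x)) - ∑ x, μ x * klBin (fs (hs x)) (fw (hw x)) + Q := by
    have hpt : ∀ x ∈ (Finset.univ : Finset 𝒳), μ x * xeBin (g x) (fs (hs x))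
        = μ x * xeBin (g x) (fw (hw x)) - μ x * klBin (fs (hs x)) (fw (hw x))
          + μ x * ((fs (hs x) - g x) * D x) := by
      intro x _
      have h01 := hboxIoo x _ (hboxC fs hfsmem x)
      rw [xe_identity h01.1 h01.2 (hfw (hw x)).1 (hfw (hw x)).2, hD]
      ring
    rw [Finset.sum_congr rfl hpt, Finset.sum_add_distrib, Finset.sum_sub_distrib, ← hQ]
  have hcast : ((8:ℝ) * (k:ℕ)) = 8 * ((k:ℕ):ℝ) := by norm_num
  rw [hXE]
  linarith [hQbound, hgap, hε]
end

section
/- Let X be a random variable with finite support 𝒳 in which every point has positive probability, let h_s: 𝒳 → ℝ^{d_s} and h_w: 𝒳 → ℝ^{d_w} be maps, let g: 𝒳 → Δ^{c−1}, let f_w: ℝ^{d_w} → Δ^{c−1}, and let 𝓕 be a set of functions ℝ^{d_s} → Δ^{c−1} such that g = f_* ∘ h_s for some f_* ∈ 𝓕, and such that ρ_i := E[sup_{f ∈ 𝓕} 1/f_i(h_s(X))] < ∞ for every i ∈ {1,…,c}. Then for every k ∈ ℕ and every ε > 0 there exists δ > 0 such that every f_s ∈ co^k 𝓕 satisfying E[D_KL(f_s(h_s(X))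 ‖ f_w(h_w(X)))] ≤ inf_{f ∈ co^k 𝓕} E[D_KL(f(h_s(X)) ‖ f_w(h_w(X)))] + δ also satisfies E[XE(g(X) ‖ f_s(h_s(X)))] ≤ E[XE(g(X) ‖ f_w(h_w(X)))] − E[D_KL(f_s(h_s(X)) ‖ f_w(h_w(X)))] + (1/(8k))·Σ_{i=1}^c ρ_i + (max_{i ∈ [c]} ρ_i)^{3/2}·√(c/(4k)) + ε. -/
open Real

/-- The open probability simplex `Δ^{c−1} = {p ∈ (0,1)^c : Σ p_i = 1}`. -/
def openSimplex (c : ℕ) : Set (Fin c → ℝ) :=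
  {p | (∀ i, p i ∈ Set.Ioo (0:ℝ) 1) ∧ ∑ i, p i = 1}

/-- Multi-class KL divergence `D_KL(p ‖ q) = Σ_i p_i log(p_i/q_i)`. -/
noncomputable def klVec {c : ℕ} (p q : Fin c → ℝ) : ℝ :=
  ∑ i, p i * Real.log (p i / q i)

/-- Multi-class cross-entropy `XE(p ‖ q) = −Σ_i p_i log q_i`. -/
noncomputable def xeVec {c : ℕ} (p q : Fin c → ℝ) : ℝ :=
  -∑ i, p i * Real.log (q i)

section AuxForMisfitGain
open Finset


lemma sum_prod_eval {k N : ℕ} (f : Fin k → Fin N → ℝ) :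
    ∑ ω : Fin k → Fin N, ∏ m, f m (ω m) = ∏ m, ∑ a, f m a := by
  rw [Finset.prod_univ_sum]
  rw [Fintype.piFinset_univ]

lemma E_single {k N : ℕ} (ν : Fin N → ℝ) (hν1 : ∑ a, ν a = 1)
    (j : Fin k) (G : Fin N → ℝ) :
    ∑ ω : Fin k → Fin N, (∏ m, ν (ω m)) * G (ω j) = ∑ a, ν a * G a := by
  classical
  set F : Fin k → Fin N → ℝ := fun m b => if m = j then ν b * G b else ν b with hF
  have h1 : ∀ ω : Fin k → Fin N, (∏ m, ν (ω m)) * G (ω j) = ∏ m, F m (ω m) := by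
    intro ω
    rw [← Finset.prod_erase_mul univ (fun m => F m (ω m)) (mem_univ j),
        ← Finset.prod_erase_mul univ (fun m => ν (ω m)) (mem_univ j)]
    have e1 : F j (ω j) = ν (ω j) * G (ω j) := by simp [hF]
    have e2 : ∏ m ∈ univ.erase j, F m (ω m) = ∏ m ∈ univ.erase j, ν (ω m) :=
      Finset.prod_congr rfl (fun m hm => by simp [hF, Finset.ne_of_mem_erase hm])
    rw [e1, e2]; ring
  rw [Finset.sum_congr rfl (fun ω _ => h1 ω), sum_prod_eval]
  have h2 : ∀ m : Fin k, (∑ a, F m a) = if m = j then ∑ a, ν a * G a else 1 := by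
    intro m
    by_cases hm : m = j <;> simp [hF, hm, hν1]
  rw [Finset.prod_congr rfl (fun m _ => h2 m)]
  simp

lemma E_pair {k N : ℕ} (ν : Fin N → ℝ) (hν1 : ∑ a, ν a = 1)
    {j l : Fin k} (hjl : j ≠ l) (G : Fin N → ℝ) :
    ∑ ω : Fin k → Fin N, (∏ m, ν (ω m)) * (G (ω j) * G (ω l))
      = (∑ a, ν a * G a) * (∑ a, ν a * G a) := by
  classical
  set F : Fin k → Fin N → ℝ := fun m b =>
    if m = j then ν b * G b else if m = l then ν b * G b else ν b with hF
  have hlj : l ∈ univ.erase j := Finset.mem_erase.2 ⟨Ne.symm hjl, mem_univ l⟩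
  have h1 : ∀ ω : Fin k → Fin N, (∏ m, ν (ω m)) * (G (ω j) * G (ω l)) = ∏ m, F m (ω m) := by
    intro ω
    rw [← Finset.prod_erase_mul univ (fun m => F m (ω m)) (mem_univ j),
        ← Finset.prod_erase_mul (univ.erase j) (fun m => F m (ω m)) hlj,
        ← Finset.prod_erase_mul univ (fun m => ν (ω m)) (mem_univ j),
        ← Finset.prod_erase_mul (univ.erase j) (fun m => ν (ω m)) hlj]
    have e1 : F j (ω j) = ν (ω j) * G (ω j) := by simp [hF]
    have e2 : F l (ω l) = ν (ω l) * G (ω l) := by simp [hF, Ne.symm hjl, hjl]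
    have e3 : ∏ m ∈ (univ.erase j).erase l, F m (ω m)
        = ∏ m ∈ (univ.erase j).erase l, ν (ω m) :=
      Finset.prod_congr rfl (fun m hm => by
        have hmj : m ≠ j := Finset.ne_of_mem_erase (Finset.mem_of_mem_erase hm)
        have hml : m ≠ l := Finset.ne_of_mem_erase hm
        simp [hF, hmj, hml])
    rw [e1, e2, e3]; ring
  rw [Finset.sum_congr rfl (fun ω _ => h1 ω), sum_prod_eval]
  have h2 : ∀ m : Fin k, (∑ a, F m a)
      = if m = j then ∑ a, ν a * G a else if m = l then ∑ a, ν a * G a else 1 := by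
    intro m
    by_cases hmj : m = j
    · simp [hF, hmj]
    · by_cases hml : m = l <;> simp [hF, hmj, hml, hν1]
  rw [Finset.prod_congr rfl (fun m _ => h2 m),
      ← Finset.prod_erase_mul univ _ (mem_univ j),
      ← Finset.prod_erase_mul (univ.erase j) _ hlj]
  simp only [if_pos rfl, if_neg (Ne.symm hjl), if_neg hjl]
  rw [Finset.prod_congr rfl (fun m hm => by
    have hmj : m ≠ j := Finset.ne_of_mem_erase (Finset.mem_of_mem_erase hm)
    have hml : m ≠ l := Finset.ne_of_mem_erase hm
    simp only [if_neg hmj, if_neg hml] : ∀ m ∈ (univ.erase j).erase l,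
      (if m = j then ∑ a, ν a * G a else if m = l then ∑ a, ν a * G a else 1) = 1)]
  simp [mul_comm]


lemma log_le_half_sub (u : ℝ) (hu : 1 ≤ u) : Real.log u ≤ (u - u⁻¹)/2 := by
  have key : ∀ v ∈ Set.Ici (1:ℝ), ((1:ℝ) - 1⁻¹)/2 - Real.log 1 ≤ (v - v⁻¹)/2 - Real.log v → True := fun _ _ _ => trivial
  -- monotone approach
  set f : ℝ → ℝ := fun v => (v - v⁻¹)/2 - Real.log v with hf
  have hmono : MonotoneOn f (Set.Ici 1) := by
    have hderiv : ∀ v ∈ interior (Set.Ici (1:ℝ)), 0 ≤ deriv f v := by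
      intro v hv
      rw [interior_Ici] at hv
      have hv0 : (0:ℝ) < v := lt_trans one_pos hv
      have hd : HasDerivAt f ((1 - (-(v^2)⁻¹))/2 - v⁻¹) v := by
        have h1 : HasDerivAt (fun v : ℝ => v - v⁻¹) (1 - (-(v^2)⁻¹)) v :=
          (hasDerivAt_id v).sub (hasDerivAt_inv (ne_of_gt hv0))
        have h2 : HasDerivAt (fun v : ℝ => (v - v⁻¹)/2) ((1 - (-(v^2)⁻¹))/2) v := h1.div_const 2
        exact h2.sub (Real.hasDerivAt_log (ne_of_gt hv0))
      rw [hd.deriv]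
      have h3 : (1 - (-(v^2)⁻¹))/2 - v⁻¹ = (1 - v⁻¹)^2/2 + ((v^2)⁻¹ - (v⁻¹)^2)/2 := by ring
      rw [h3]
      have h4 : ((v ^ 2)⁻¹ - v⁻¹ ^ 2) = 0 := by
        rw [← inv_pow]; ring
      rw [h4]
      positivity
    apply monotoneOn_of_deriv_nonneg (convex_Ici 1)
    · apply ContinuousOn.sub (ContinuousOn.div_const (ContinuousOn.sub continuousOn_id ?_) 2)
      · exact Real.continuousOn_log.mono (fun v hv => ne_of_gt (lt_of_lt_of_le one_pos hv))
      · exact ContinuousOn.inv₀ continuousOn_id (fun v hv => ne_of_gt (lt_of_lt_of_le one_pos hv))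
    · intro v hv
      rw [interior_Ici] at hv
      have hv0 : (0:ℝ) < v := lt_trans one_pos hv
      apply DifferentiableAt.differentiableWithinAt
      apply DifferentiableAt.sub
      · exact (DifferentiableAt.sub differentiableAt_id (differentiableAt_inv (ne_of_gt hv0))).div_const 2
      · exact Real.differentiableAt_log (ne_of_gt hv0)
    · exact hderiv
  have := hmono (Set.mem_Ici.2 le_rfl) (Set.mem_Ici.2 hu) hu
  simp only [hf, inv_one, Real.log_one] at this
  linarith

lemma log_ge_quad (v : ℝ) (hv : 1 ≤ v) : (v - 1) - (v - 1)^2/2 ≤ Real.log v := by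
  set f : ℝ → ℝ := fun v => Real.log v - (v - 1) + (v - 1)^2/2 with hf
  have hmono : MonotoneOn f (Set.Ici 1) := by
    apply monotoneOn_of_deriv_nonneg (convex_Ici 1)
    · apply ContinuousOn.add (ContinuousOn.sub ?_ (by fun_prop)) (by fun_prop)
      exact Real.continuousOn_log.mono (fun v hv => ne_of_gt (lt_of_lt_of_le one_pos hv))
    · intro v hv
      rw [interior_Ici] at hv
      have hv0 : (0:ℝ) < v := lt_trans one_pos hv
      apply DifferentiableAt.differentiableWithinAt
      exact ((Real.differentiableAt_log (ne_of_gt hv0)).sub (by fun_prop)).add (by fun_prop)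
    · intro v hv
      rw [interior_Ici] at hv
      have hv0 : (0:ℝ) < v := lt_trans one_pos hv
      have hd : HasDerivAt f (v⁻¹ - 1 + (v - 1)) v := by
        have h1 : HasDerivAt (fun v : ℝ => Real.log v - (v - 1)) (v⁻¹ - 1) v :=
          (Real.hasDerivAt_log (ne_of_gt hv0)).sub ((hasDerivAt_id v).sub_const 1)
        have h2 : HasDerivAt (fun v : ℝ => (v - 1)^2/2) (v - 1) v := by
          have := (((hasDerivAt_id v).sub_const 1).pow 2).div_const 2
          simpa using this
        exact h1.add h2
      rw [hd.deriv]
      have : v⁻¹ - 1 + (v - 1) = (v - 1)^2 * v⁻¹ := by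
        field_simp; ring
      rw [this]; positivity
  have := hmono (Set.mem_Ici.2 le_rfl) (Set.mem_Ici.2 hv) hv
  simp only [hf, Real.log_one] at this
  nlinarith [this]



/-- Scalar second-order bound for `x log x`. -/
lemma scalar_kl2 (a b s : ℝ) (hs : 0 < s) (ha : s⁻¹ ≤ a) (hb : s⁻¹ ≤ b) :
    b * Real.log (b/a) - (b - a) ≤ s * (b - a)^2 / 2 := by
  have hs' : (0:ℝ) < s⁻¹ := inv_pos.2 hs
  have ha0 : 0 < a := lt_of_lt_of_le hs' ha
  have hb0 : 0 < b := lt_of_lt_of_le hs' hb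
  have hainv : a⁻¹ ≤ s := by
    rw [inv_le_comm₀ ha0 hs] at *; exact ha
  have hbinv : b⁻¹ ≤ s := by
    rw [inv_le_comm₀ hb0 hs] at *; exact hb
  rcases le_total a b with hab | hab
  · -- b ≥ a, u = b/a ≥ 1
    have hu : 1 ≤ b/a := (one_le_div ha0).2 hab
    have hlog := log_le_half_sub (b/a) hu
    have hinv : (b/a)⁻¹ = a/b := by rw [inv_div]
    rw [hinv] at hlog
    have h1 : b * Real.log (b/a) ≤ b * ((b/a - a/b)/2) :=
      mul_le_mul_of_nonneg_left hlog (le_of_lt hb0)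
    have h2 : b * ((b/a - a/b)/2) - (b - a) = (b-a)^2/(2*a) := by
      field_simp; ring
    have h3 : (b-a)^2/(2*a) ≤ s * (b-a)^2/2 := by
      rw [div_le_iff₀ (by positivity)]
      have : s * (b - a) ^ 2 / 2 * (2 * a) = (s * a) * (b-a)^2 := by ring
      rw [this]
      have hsa : 1 ≤ s * a := by
        rw [← inv_le_iff_one_le_mul₀' hs]  -- might not exist; fallback below
        exact ha
      nlinarith [sq_nonneg (b-a)]
    linarith
  · -- a ≥ b, v = a/b ≥ 1
    have hv : 1 ≤ a/b := (one_le_div hb0).2 hab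
    have hlog := log_ge_quad (a/b) hv
    have hlba : Real.log (b/a) = - Real.log (a/b) := by
      rw [← Real.log_inv, inv_div]
    have h1 : b * Real.log (b/a) - (b - a) = b * ((a/b - 1) - Real.log (a/b)) := by
      rw [hlba]; field_simp; ring
    have h2 : (a/b - 1) - Real.log (a/b) ≤ (a/b - 1)^2/2 := by linarith
    have h3 : b * ((a/b - 1) - Real.log (a/b)) ≤ b * ((a/b-1)^2/2) :=
      mul_le_mul_of_nonneg_left h2 (le_of_lt hb0)
    have h4 : b * ((a/b-1)^2/2) = (b-a)^2/(2*b) := by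
      field_simp; ring
    have h5 : (b-a)^2/(2*b) ≤ s * (b-a)^2/2 := by
      rw [div_le_iff₀ (by positivity)]
      have : s * (b - a) ^ 2 / 2 * (2 * b) = (s * b) * (b-a)^2 := by ring
      rw [this]
      have hsb : 1 ≤ s * b := by
        rw [← inv_le_iff_one_le_mul₀' hs]
        exact hb
      nlinarith [sq_nonneg (b-a)]
    linarith

/-- Gibbs' inequality. -/
lemma klVec_nonneg {c : ℕ} {p q : Fin c → ℝ} (hp : ∀ i, 0 < p i) (hq : ∀ i, 0 < q i)
    (hpq : ∑ i, p i = ∑ i, q i) : 0 ≤ klVec p q := by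
  have h : ∀ i, p i - q i ≤ p i * Real.log (p i / q i) := by
    intro i
    have hl : Real.log (q i / p i) ≤ q i / p i - 1 :=
      Real.log_le_sub_one_of_pos (div_pos (hq i) (hp i))
    have hee : Real.log (q i / p i) = - Real.log (p i / q i) := by
      rw [← Real.log_inv, inv_div]
    rw [hee] at hl
    have h2 := mul_le_mul_of_nonneg_left (neg_le_neg hl) (le_of_lt (hp i))
    have heq : p i * -(q i / p i - 1) = p i - q i := by
      have hpi := ne_of_gt (hp i)
      field_simp; ring
    rw [heq] at h2
    have h3 : p i * - -Real.log (p i / q i) = p i * Real.log (p i / q i) := by ring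
    rw [h3] at h2
    exact h2
  calc (0:ℝ) = ∑ i, (p i - q i) := by rw [Finset.sum_sub_distrib, hpq]; ring
  _ ≤ ∑ i, p i * Real.log (p i / q i) := Finset.sum_le_sum (fun i _ => h i)
  _ = klVec p q := rfl




/-- Vector second-order upper bound for KL in the first argument. -/
lemma klVec_second_order {c : ℕ} (p q r s : Fin c → ℝ)
    (hr : ∀ i, 0 < r i) (hsp : ∀ i, 0 < s i)
    (hp : ∀ i, (s i)⁻¹ ≤ p i) (hq : ∀ i, (s i)⁻¹ ≤ q i) :
    klVec q r ≤ klVec p r + ∑ i, (Real.log (p i / r i) + 1) * (q i - p i)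
      + ∑ i, s i * (q i - p i)^2 / 2 := by
  have hp0 : ∀ i, 0 < p i := fun i => lt_of_lt_of_le (inv_pos.2 (hsp i)) (hp i)
  have hq0 : ∀ i, 0 < q i := fun i => lt_of_lt_of_le (inv_pos.2 (hsp i)) (hq i)
  have key : ∀ i, q i * Real.log (q i / r i) ≤ p i * Real.log (p i / r i)
      + (Real.log (p i / r i) + 1) * (q i - p i) + s i * (q i - p i)^2 / 2 := by
    intro i
    have h1 := scalar_kl2 (p i) (q i) (s i) (hsp i) (hp i) (hq i)
    -- q log(q/r) = q log(q/p) + q log(p/r)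
    have h2 : Real.log (q i / r i) = Real.log (q i / p i) + Real.log (p i / r i) := by
      have hpne := ne_of_gt (hp0 i)
      have hrne := ne_of_gt (hr i)
      have hqne := ne_of_gt (hq0 i)
      rw [← Real.log_mul (ne_of_gt (div_pos (hq0 i) (hp0 i))) (ne_of_gt (div_pos (hp0 i) (hr i)))]
      rw [div_mul_div_comm]
      congr 1
      field_simp
    rw [h2]
    have h3 : q i * (Real.log (q i / p i) + Real.log (p i / r i))
        = q i * Real.log (q i / p i) + q i * Real.log (p i / r i) := by ring
    rw [h3]
    nlinarith [h1]
  calc klVec q r = ∑ i, q i * Real.log (q i / r i) := rfl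
  _ ≤ ∑ i, (p i * Real.log (p i / r i)
      + (Real.log (p i / r i) + 1) * (q i - p i) + s i * (q i - p i)^2 / 2) :=
    Finset.sum_le_sum (fun i _ => key i)
  _ = klVec p r + ∑ i, (Real.log (p i / r i) + 1) * (q i - p i)
      + ∑ i, s i * (q i - p i)^2 / 2 := by
    rw [Finset.sum_add_distrib, Finset.sum_add_distrib]; rfl

/-- Convexity inequality for KL in the first argument. -/
lemma klVec_mix {c : ℕ} (p g r : Fin c → ℝ) (t : ℝ) (ht0 : 0 < t) (ht1 : t ≤ 1)
    (hp : ∀ i, 0 < p i) (hg : ∀ i, 0 < g i) (hr : ∀ i, 0 < r i)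
    (hps : ∑ i, p i = 1) (hgs : ∑ i, g i = 1) :
    klVec (fun i => (1-t) * p i + t * g i) r + t * klVec g (fun i => (1-t) * p i + t * g i)
      ≤ (1-t) * klVec p r + t * klVec g r := by
  set m : Fin c → ℝ := fun i => (1-t) * p i + t * g i with hm
  have hm0 : ∀ i, 0 < m i := by
    intro i
    have h1 : 0 ≤ (1-t) * p i := mul_nonneg (by linarith) (le_of_lt (hp i))
    have h2 : 0 < t * g i := mul_pos ht0 (hg i)
    simp only [hm]; linarith
  have hmsum : ∑ i, m i = 1 := by
    simp only [hm]
    rw [Finset.sum_add_distrib, ← Finset.mul_sum, ← Finset.mul_sum, hps, hgs]; ring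
  have hident : klVec m r = (1-t) * klVec p r + t * klVec g r
      - (1-t) * klVec p m - t * klVec g m := by
    unfold m
    unfold klVec
    rw [Finset.mul_sum, Finset.mul_sum, Finset.mul_sum, Finset.mul_sum]
    rw [← Finset.sum_add_distrib, ← Finset.sum_sub_distrib, ← Finset.sum_sub_distrib]
    apply Finset.sum_congr rfl
    intro i _
    have e1 : Real.log (((1-t) * p i + t * g i) / r i)
        = Real.log ((1-t) * p i + t * g i) - Real.log (r i) :=
      Real.log_div (ne_of_gt (hm0 i)) (ne_of_gt (hr i))
    have e2 : Real.log (p i / r i) = Real.log (p i) - Real.log (r i) :=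
      Real.log_div (ne_of_gt (hp i)) (ne_of_gt (hr i))
    have e3 : Real.log (g i / r i) = Real.log (g i) - Real.log (r i) :=
      Real.log_div (ne_of_gt (hg i)) (ne_of_gt (hr i))
    have e4 : Real.log (p i / ((1-t) * p i + t * g i))
        = Real.log (p i) - Real.log ((1-t) * p i + t * g i) :=
      Real.log_div (ne_of_gt (hp i)) (ne_of_gt (hm0 i))
    have e5 : Real.log (g i / ((1-t) * p i + t * g i))
        = Real.log (g i) - Real.log ((1-t) * p i + t * g i) :=
      Real.log_div (ne_of_gt (hg i)) (ne_of_gt (hm0 i))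
    rw [e1, e2, e3, e4, e5]
    ring
  have hgibbs : 0 ≤ klVec p m := klVec_nonneg hp hm0 (by rw [hps, hmsum])
  have ht1' : 0 ≤ 1 - t := by linarith
  nlinarith [mul_nonneg ht1' hgibbs]

/-- Popoviciu-type variance bound. -/
lemma variance_bound {N : ℕ} (ν Z : Fin N → ℝ) (lo hi : ℝ)
    (hν0 : ∀ a, 0 ≤ ν a) (hν1 : ∑ a, ν a = 1)
    (hZ : ∀ a, lo ≤ Z a ∧ Z a ≤ hi) :
    ∑ a, ν a * (Z a - ∑ b, ν b * Z b)^2 ≤ (hi - lo)^2/4 := by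
  set μ : ℝ := ∑ b, ν b * Z b with hμ
  have h1 : ∑ a, ν a * (Z a - μ)^2 = (∑ a, ν a * (Z a)^2) - μ^2 := by
    have : ∀ a, ν a * (Z a - μ)^2 = ν a * (Z a)^2 - 2*μ*(ν a * Z a) + μ^2 * ν a := by
      intro a; ring
    rw [Finset.sum_congr rfl (fun a _ => this a), Finset.sum_add_distrib,
        Finset.sum_sub_distrib, ← Finset.mul_sum, ← Finset.mul_sum, ← hμ, hν1]
    ring
  have h2 : ∑ a, ν a * (Z a)^2 ≤ ∑ a, ν a * ((lo + hi) * Z a - lo * hi) := by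
    apply Finset.sum_le_sum
    intro a _
    apply mul_le_mul_of_nonneg_left _ (hν0 a)
    nlinarith [(hZ a).1, (hZ a).2]
  have h3 : ∑ a, ν a * ((lo + hi) * Z a - lo * hi) = (lo + hi) * μ - lo * hi := by
    have : ∀ a, ν a * ((lo + hi) * Z a - lo * hi)
        = (lo + hi) * (ν a * Z a) - lo * hi * ν a := by intro a; ring
    rw [Finset.sum_congr rfl (fun a _ => this a), Finset.sum_sub_distrib,
        ← Finset.mul_sum, ← Finset.mul_sum, ← hμ, hν1]
    ring
  rw [h1]
  nlinarith [sq_nonneg (hi + lo - 2*μ)]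

lemma chi_step (T σ C : ℝ) (h1 : C^2 ≤ T*σ) (h2 : σ ≤ 1) (h3 : 0 ≤ σ) (h4 : 0 ≤ T) :
    (1 - σ)^2 * T ≤ T - C^2 := by
  nlinarith [mul_nonneg (mul_nonneg h4 h3) (by linarith : (0:ℝ) ≤ 1 - σ)]

end AuxForMisfitGain

set_option maxHeartbeats 1000000

/-- **Multi-Class Misfit-Gain Inequality over `co^k 𝓕`** (non-convex strong class, with
regularization).  `s i x = sup_{f ∈ 𝓕} 1/f_i(h_s(x))` exists (this is the finiteness of the
`ρ_i`). -/
theorem multiclass_misfit_gain_cok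
    {c ds dw : ℕ} {𝒳 : Type*} [Fintype 𝒳]
    (μ : 𝒳 → ℝ) (hμpos : ∀ x, 0 < μ x) (hμsum : ∑ x, μ x = 1)
    (hs : 𝒳 → Fin ds → ℝ) (hw : 𝒳 → Fin dw → ℝ)
    (g : 𝒳 → Fin c → ℝ) (hg : ∀ x, g x ∈ openSimplex c)
    (fw : (Fin dw → ℝ) → Fin c → ℝ) (hfw : ∀ v, fw v ∈ openSimplex c)
    (𝓕 : Set ((Fin ds → ℝ) → Fin c → ℝ))
    (h𝓕mem : ∀ f ∈ 𝓕, ∀ v, f v ∈ openSimplex c)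
    (hreal : ∃ fstar ∈ 𝓕, ∀ x, g x = fstar (hs x))
    (s : Fin c → 𝒳 → ℝ)
    (hsup : ∀ i x,
      IsLUB ((fun f : (Fin ds → ℝ) → Fin c → ℝ => 1 / f (hs x) i) '' 𝓕) (s i x))
    (ρ : Fin c → ℝ)
    (hρ : ∀ i, ρ i = ∑ x, μ x * s i x) :
    ∀ k : ℕ, 0 < k → ∀ ε > 0, ∃ δ > 0, ∀ fs ∈ convComb k 𝓕,
      (∑ x, μ x * klVec (fs (hs x)) (fw (hw x))) ≤
        (⨅ f : convComb k 𝓕,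
          ∑ x, μ x * klVec ((f : (Fin ds → ℝ) → Fin c → ℝ) (hs x)) (fw (hw x))) + δ →
      ∑ x, μ x * xeVec (g x) (fs (hs x)) ≤
        ∑ x, μ x * xeVec (g x) (fw (hw x))
          - ∑ x, μ x * klVec (fs (hs x)) (fw (hw x))
          + (1 / (8 * k)) * ∑ i, ρ i
          + (⨆ i, ρ i) ^ ((3:ℝ)/2) * Real.sqrt (c / (4 * k)) + ε := by
    classical
  intro k hk ε hε
  have hμ0 : ∀ x, 0 ≤ μ x := fun x => le_of_lt (hμpos x)
  have hX : Nonempty 𝒳 := by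
    by_contra h
    rw [not_nonempty_iff] at h
    rw [Finset.univ_eq_empty, Finset.sum_empty] at hμsum
    exact absurd hμsum (by norm_num)
  obtain ⟨x₀⟩ := hX
  have hc : 0 < c := by
    rcases Nat.eq_zero_or_pos c with h | h
    · exfalso
      have h2 := (hg x₀).2
      subst h
      simp at h2
    · exact h
  have hc0' : (0:ℝ) < (c:ℝ) := Nat.cast_pos.2 hc
  haveI : Nonempty (Fin c) := Fin.pos_iff_nonempty.1 hc
  obtain ⟨fstar, hfstar, hgstar⟩ := hreal
  -- facts about 𝓕
  have hFpos : ∀ f ∈ 𝓕, ∀ v i, 0 < f v i := fun f hf v i => ((h𝓕mem f hf v).1 i).1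
  have hFlt : ∀ f ∈ 𝓕, ∀ v i, f v i < 1 := fun f hf v i => ((h𝓕mem f hf v).1 i).2
  have hFsum : ∀ f ∈ 𝓕, ∀ v, ∑ i, f v i = 1 := fun f hf v => (h𝓕mem f hf v).2
  have hsub : ∀ i x, ∀ f ∈ 𝓕, 1 / f (hs x) i ≤ s i x := fun i x f hf =>
    (hsup i x).1 (Set.mem_image_of_mem _ hf)
  have hs1 : ∀ i x, 1 < s i x := by
    intro i x
    have h1 : 1 < 1 / fstar (hs x) i :=
      one_lt_one_div (hFpos _ hfstar _ i) (hFlt _ hfstar _ i)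
    exact lt_of_lt_of_le h1 (hsub i x fstar hfstar)
  have hs0 : ∀ i x, 0 < s i x := fun i x => lt_trans one_pos (hs1 i x)
  have hls : ∀ i x, ∀ f ∈ 𝓕, (s i x)⁻¹ ≤ f (hs x) i := by
    intro i x f hf
    have h1 := hsub i x f hf
    rw [one_div] at h1
    exact (inv_le_comm₀ (hs0 i x) (hFpos f hf _ i)).2 h1
  have hgs_lo : ∀ i x, (s i x)⁻¹ ≤ g x i := by
    intro i x
    rw [hgstar x]
    exact hls i x fstar hfstar
  have hg0 : ∀ x i, 0 < g x i := fun x i => ((hg x).1 i).1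
  have hgsum : ∀ x, ∑ i, g x i = 1 := fun x => (hg x).2
  have hR0 : ∀ x i, 0 < fw (hw x) i := fun x i => ((hfw (hw x)).1 i).1
  have hRsum : ∀ x, ∑ i, fw (hw x) i = 1 := fun x => (hfw (hw x)).2
  -- facts about convComb members
  have hco : ∀ fc ∈ convComb k 𝓕, ∀ x,
      (∀ i, (s i x)⁻¹ ≤ fc (hs x) i ∧ fc (hs x) i ≤ 1) ∧ ∑ i, fc (hs x) i = 1 := by
    intro fc hfc x
    obtain ⟨w, z, hw0, hw1, hz, rfl⟩ := hfc
    have heval : ∀ i, (∑ j, w j • z j) (hs x) i = ∑ j, w j * z j (hs x) i := by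
      intro i
      rw [Finset.sum_apply, Finset.sum_apply]
      simp
    constructor
    · intro i
      rw [heval]
      constructor
      · calc (s i x)⁻¹ = ∑ j, w j * (s i x)⁻¹ := by
              rw [← Finset.sum_mul, hw1, one_mul]
          _ ≤ ∑ j, w j * z j (hs x) i := Finset.sum_le_sum fun j _ =>
              mul_le_mul_of_nonneg_left (hls i x _ (hz j)) (hw0 j)
      · calc ∑ j, w j * z j (hs x) i ≤ ∑ j, w j * 1 := Finset.sum_le_sum fun j _ =>
              mul_le_mul_of_nonneg_left (le_of_lt (hFlt _ (hz j) _ i)) (hw0 j)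
          _ = 1 := by rw [← Finset.sum_mul, hw1, one_mul] -- careful: ∑ w*1 = (∑w)*1
    · rw [Finset.sum_congr rfl (fun i (_ : i ∈ Finset.univ) => heval i), Finset.sum_comm]
      calc ∑ j, ∑ i, w j * z j (hs x) i = ∑ j : Fin k, w j := by
            apply Finset.sum_congr rfl
            intro j _
            rw [← Finset.mul_sum, hFsum _ (hz j), mul_one]
        _ = 1 := hw1
  have hco_pos : ∀ fc ∈ convComb k 𝓕, ∀ x i, 0 < fc (hs x) i := by
    intro fc hfc x i
    exact lt_of_lt_of_le (inv_pos.2 (hs0 i x)) (((hco fc hfc x).1 i).1)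
  have hLL0 : ∀ fc ∈ convComb k 𝓕, 0 ≤ ∑ x, μ x * klVec (fc (hs x)) (fw (hw x)) := by
    intro fc hfc
    apply Finset.sum_nonneg
    intro x _
    apply mul_nonneg (hμ0 x)
    exact klVec_nonneg (hco_pos fc hfc x) (hR0 x) (((hco fc hfc x).2).trans (hRsum x).symm)
  -- aggregate quantities
  have hσ1 : ∀ x, ∑ i, (s i x)⁻¹ ≤ 1 := by
    intro x
    calc ∑ i, (s i x)⁻¹ ≤ ∑ i, g x i := Finset.sum_le_sum fun i _ => hgs_lo i x
      _ = 1 := hgsum x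
  have hσ0 : ∀ x, 0 ≤ ∑ i, (s i x)⁻¹ :=
    fun x => Finset.sum_nonneg fun i _ => le_of_lt (inv_pos.2 (hs0 i x))
  have hT0 : ∀ x, 0 ≤ ∑ i, s i x :=
    fun x => Finset.sum_nonneg fun i _ => le_of_lt (hs0 i x)
  have hCS : ∀ x, (c:ℝ)^2 ≤ (∑ i, s i x) * (∑ i, (s i x)⁻¹) := by
    intro x
    have h1 : ((c:ℝ)) = ∑ i : Fin c, Real.sqrt (s i x) * (Real.sqrt (s i x))⁻¹ := by
      rw [Finset.sum_congr rfl (fun i (_ : i ∈ Finset.univ) =>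
        mul_inv_cancel₀ (ne_of_gt (Real.sqrt_pos.2 (hs0 i x))))]
      simp
    have h2 := Finset.sum_mul_sq_le_sq_mul_sq Finset.univ
      (fun i => Real.sqrt (s i x)) (fun i => (Real.sqrt (s i x))⁻¹)
    rw [← h1] at h2
    calc (c:ℝ)^2 ≤ (∑ i, Real.sqrt (s i x)^2) * (∑ i, ((Real.sqrt (s i x))⁻¹)^2) := h2
      _ = (∑ i, s i x) * (∑ i, (s i x)⁻¹) := by
        congr 1
        · exact Finset.sum_congr rfl fun i _ => Real.sq_sqrt (le_of_lt (hs0 i x))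
        · exact Finset.sum_congr rfl fun i _ => by
            rw [inv_pow, Real.sq_sqrt (le_of_lt (hs0 i x))]
  have hTc : ∀ x, (c:ℝ)^2 ≤ ∑ i, s i x := by
    intro x
    have h3 : (∑ i, s i x) * (∑ i, (s i x)⁻¹) ≤ (∑ i, s i x) * 1 :=
      mul_le_mul_of_nonneg_left (hσ1 x) (hT0 x)
    rw [mul_one] at h3
    exact le_trans (hCS x) h3
  set S : ℝ := ∑ i, ρ i with hS
  set m : ℝ := ⨆ i, ρ i with hm
  have hρm : ∀ i, ρ i ≤ m := fun i =>
    le_ciSup (Set.Finite.bddAbove (Set.finite_range ρ)) i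
  have hST : S = ∑ x, μ x * (∑ i, s i x) := by
    rw [hS, Finset.sum_congr rfl (fun i (_ : i ∈ Finset.univ) => hρ i), Finset.sum_comm]
    exact Finset.sum_congr rfl fun x _ => (Finset.mul_sum _ _ _).symm
  have hc2S : (c:ℝ)^2 ≤ S := by
    rw [hST]
    calc ((c:ℝ))^2 = ∑ x, μ x * (c:ℝ)^2 := by rw [← Finset.sum_mul, hμsum, one_mul]
      _ ≤ ∑ x, μ x * ∑ i, s i x :=
        Finset.sum_le_sum fun x _ => mul_le_mul_of_nonneg_left (hTc x) (hμ0 x)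
  have hS0 : 0 < S := lt_of_lt_of_le (by positivity) hc2S
  have hSm : S ≤ (c:ℝ) * m := by
    rw [hS]
    calc ∑ i, ρ i ≤ ∑ _i : Fin c, m := Finset.sum_le_sum fun i _ => hρm i
      _ = (c:ℝ) * m := by
        rw [Finset.sum_const, Finset.card_univ, Fintype.card_fin, nsmul_eq_mul]
  have hcm : (c:ℝ) ≤ m := by nlinarith
  have hm0 : 0 < m := lt_of_lt_of_le hc0' hcm
  have hk1 : (1:ℝ) ≤ (k:ℝ) := Nat.one_le_cast.2 hk
  have hk0 : (0:ℝ) < (k:ℝ) := lt_of_lt_of_le one_pos hk1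
  set W : ℝ := S - (c:ℝ)^2 with hW
  have hW0 : 0 ≤ W := by rw [hW]; linarith
  have hstep : 2*(c:ℝ)*(m - c) ≤ m^2 := by
    nlinarith [sq_nonneg (m - 2*(c:ℝ)), mul_nonneg (le_of_lt hc0') (sub_nonneg.2 hcm)]
  have h2SW : 2 * S * W ≤ (c:ℝ) * m^3 := by
    have e1 : 2*S*W ≤ 2*((c:ℝ)*m)*W := by nlinarith
    have e2 : W ≤ (c:ℝ)*m - (c:ℝ)^2 := by rw [hW]; linarith
    have e3 : 2*((c:ℝ)*m)*W ≤ 2*((c:ℝ)*m)*((c:ℝ)*m - (c:ℝ)^2) := by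
      apply mul_le_mul_of_nonneg_left e2
      positivity
    have e4 : 2*((c:ℝ)*m)*((c:ℝ)*m - (c:ℝ)^2) ≤ (c:ℝ)*m^3 := by
      have h5 := mul_le_mul_of_nonneg_left hstep (mul_nonneg (le_of_lt hc0') (le_of_lt hm0))
      nlinarith
    linarith
  set G : ℝ := Real.sqrt ((c:ℝ) * m^3/(4*(k:ℝ))) with hG
  have hG0 : 0 ≤ G := Real.sqrt_nonneg _
  set t : ℝ := if S ≤ 8*(k:ℝ)*W then Real.sqrt (S/(8*(k:ℝ)*W)) else 1 with ht
  have hWpos_of : S ≤ 8*(k:ℝ)*W → 0 < W := by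
    intro h
    by_contra hW'
    push_neg at hW'
    nlinarith
  have ht0 : 0 < t := by
    rw [ht]
    split_ifs with h
    · have hWpos := hWpos_of h
      apply Real.sqrt_pos.2
      positivity
    · exact one_pos
  have ht1 : t ≤ 1 := by
    rw [ht]
    split_ifs with h
    · apply Real.sqrt_le_one.2
      have hWpos := hWpos_of h
      rw [div_le_one (by positivity)]
      exact h
    · exact le_rfl
  have htkey : t*W + S/(8*(k:ℝ)*t) ≤ S/(8*(k:ℝ)) + G := by
    rw [ht]
    split_ifs with h
    · have hWpos := hWpos_of h
      set u : ℝ := Real.sqrt (S/(8*(k:ℝ)*W)) with hu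
      have hu0 : 0 < u := Real.sqrt_pos.2 (by positivity)
      have hu2 : u^2 = S/(8*(k:ℝ)*W) := Real.sq_sqrt (by positivity)
      have h8 : u^2 * (8*(k:ℝ)*W) = S := by
        rw [hu2, div_mul_cancel₀ _ (ne_of_gt (by positivity : (0:ℝ) < 8*(k:ℝ)*W))]
      have he : S/(8*(k:ℝ)*u) = u*W := by
        rw [div_eq_iff (ne_of_gt (by positivity : (0:ℝ) < 8*(k:ℝ)*u))]
        linear_combination -h8
      rw [he]
      have hle : u*W + u*W ≤ G := by
        have hsq : (u*W + u*W)^2 = S*W/(2*(k:ℝ)) := by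
          rw [eq_div_iff (ne_of_gt (by positivity : (0:ℝ) < 2*(k:ℝ)))]
          linear_combination W * h8
        have h2 : S*W/(2*(k:ℝ)) ≤ (c:ℝ)*m^3/(4*(k:ℝ)) := by
          rw [div_le_div_iff₀ (by positivity) (by positivity)]
          nlinarith [mul_le_mul_of_nonneg_left h2SW (le_of_lt hk0)]
        rw [hG]
        apply (Real.le_sqrt (by positivity) (by positivity)).2
        rw [hsq]
        exact h2
      exact le_trans hle (le_add_of_nonneg_left (by positivity))
    · push_neg at h
      rw [mul_one, one_mul]
      have hWG : W ≤ G := by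
        have h1 : W * (8*(k:ℝ)*W) ≤ W * S :=
          mul_le_mul_of_nonneg_left (le_of_lt h) hW0
        have h2 : W^2 * (16*(k:ℝ)) ≤ (c:ℝ)*m^3 := by nlinarith
        rw [hG]
        apply (Real.le_sqrt hW0 (by positivity)).2
        rw [le_div_iff₀ (by positivity)]
        nlinarith
      linarith
  -- the δ
  refine ⟨t*ε, mul_pos ht0 hε, ?_⟩
  intro fs hfs hnear
  obtain ⟨w, z, hw0, hw1, hz, rfl⟩ := hfs
  have hfs' : (∑ j, w j • z j) ∈ convComb k 𝓕 := ⟨w, z, hw0, hw1, hz, rfl⟩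
  set F0 : (Fin ds → ℝ) → Fin c → ℝ := ∑ j, w j • z j with hF0
  have heval : ∀ v i, F0 v i = ∑ j, w j * z j v i := by
    intro v i
    rw [hF0, Finset.sum_apply, Finset.sum_apply]
    simp
  have hP := hco F0 hfs'
  have hPpos := hco_pos F0 hfs'
  set Pt : 𝒳 → Fin c → ℝ := fun x i => (1 - t) * F0 (hs x) i + t * g x i with hPt
  have hPtpos : ∀ x i, 0 < Pt x i := by
    intro x i
    have h1 : 0 ≤ (1-t) * F0 (hs x) i := mul_nonneg (by linarith) (le_of_lt (hPpos x i))
    have h2 : 0 < t * g x i := mul_pos ht0 (hg0 x i)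
    rw [hPt]; dsimp only; linarith
  have hPtlo : ∀ x i, (s i x)⁻¹ ≤ Pt x i := by
    intro x i
    rw [hPt]; dsimp only
    calc (s i x)⁻¹ = (1-t)*(s i x)⁻¹ + t*(s i x)⁻¹ := by ring
      _ ≤ (1 - t) * F0 (hs x) i + t * g x i :=
        add_le_add (mul_le_mul_of_nonneg_left ((hP x).1 i).1 (by linarith))
          (mul_le_mul_of_nonneg_left (hgs_lo i x) (le_of_lt ht0))
  have hPtsum : ∀ x, ∑ i, Pt x i = 1 := by
    intro x
    rw [hPt]; dsimp only
    rw [Finset.sum_add_distrib, ← Finset.mul_sum, ← Finset.mul_sum, (hP x).2, hgsum x]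
    ring
  -- Maurey vertices and weights
  set ν : Fin (k+1) → ℝ := Fin.snoc (fun j => (1-t) * w j) t with hν
  set Z : Fin (k+1) → ((Fin ds → ℝ) → Fin c → ℝ) := Fin.snoc z fstar with hZ
  have hν0 : ∀ a, 0 ≤ ν a := by
    intro a
    induction a using Fin.lastCases with
    | last => rw [hν, Fin.snoc_last]; exact le_of_lt ht0
    | cast j => rw [hν, Fin.snoc_castSucc]; exact mul_nonneg (by linarith) (hw0 j)
  have hν1 : ∑ a, ν a = 1 := by
    rw [Fin.sum_univ_castSucc]
    have h1 : ∀ j : Fin k, ν (Fin.castSucc j) = (1-t) * w j := fun j => by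
      rw [hν, Fin.snoc_castSucc]
    have h2 : ν (Fin.last k) = t := by rw [hν, Fin.snoc_last]
    rw [Finset.sum_congr rfl (fun j _ => h1 j), h2, ← Finset.mul_sum, hw1]
    ring
  have hZF : ∀ a, Z a ∈ 𝓕 := by
    intro a
    induction a using Fin.lastCases with
    | last => rw [hZ, Fin.snoc_last]; exact hfstar
    | cast j => rw [hZ, Fin.snoc_castSucc]; exact hz j
  have hmean : ∀ x i, ∑ a, ν a * Z a (hs x) i = Pt x i := by
    intro x i
    rw [Fin.sum_univ_castSucc]
    have h1 : ∀ j : Fin k, ν (Fin.castSucc j) * Z (Fin.castSucc j) (hs x) i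
        = (1-t) * (w j * z j (hs x) i) := fun j => by
      rw [hν, hZ, Fin.snoc_castSucc, Fin.snoc_castSucc]; ring
    have h2 : ν (Fin.last k) * Z (Fin.last k) (hs x) i = t * fstar (hs x) i := by
      rw [hν, hZ, Fin.snoc_last, Fin.snoc_last]
    rw [Finset.sum_congr rfl (fun j _ => h1 j), h2, ← Finset.mul_sum, ← heval, hPt]
    dsimp only
    rw [hgstar x]
  have hZlo : ∀ a x i, (s i x)⁻¹ ≤ Z a (hs x) i := fun a x i => hls i x _ (hZF a)
  have hZhi : ∀ a x i, Z a (hs x) i ≤ 1 := fun a x i => le_of_lt (hFlt _ (hZF a) _ i)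
  have hkR0 : (0:ℝ) < (k:ℝ)⁻¹ := inv_pos.2 hk0
  set Pr : (Fin k → Fin (k+1)) → ℝ := fun ω => ∏ j, ν (ω j) with hPr
  have hPr0 : ∀ ω, 0 ≤ Pr ω := fun ω => Finset.prod_nonneg fun j _ => hν0 _
  have hPr1 : ∑ ω, Pr ω = 1 := by
    have h1 : ∑ ω : Fin k → Fin (k+1), ∏ m, ν (ω m) = ∏ m : Fin k, ∑ a, ν a :=
      sum_prod_eval (fun _ a => ν a)
    simp only [hPr]
    rw [h1, Finset.prod_congr rfl (fun (m : Fin k) _ => hν1)]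
    simp
  have hEmean : ∀ x i, ∑ ω, Pr ω * ((k:ℝ)⁻¹ * ∑ j, Z (ω j) (hs x) i) = Pt x i := by
    intro x i
    have h1 : ∀ ω : Fin k → Fin (k+1), Pr ω * ((k:ℝ)⁻¹ * ∑ j, Z (ω j) (hs x) i)
        = ∑ j, (k:ℝ)⁻¹ * (Pr ω * Z (ω j) (hs x) i) := by
      intro ω
      simp only [Finset.mul_sum]
      exact Finset.sum_congr rfl fun j _ => by ring
    rw [Finset.sum_congr rfl (fun ω (_ : ω ∈ Finset.univ) => h1 ω), Finset.sum_comm]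
    have h2 : ∀ j : Fin k, ∑ ω : Fin k → Fin (k+1), (k:ℝ)⁻¹ * (Pr ω * Z (ω j) (hs x) i)
        = (k:ℝ)⁻¹ * Pt x i := by
      intro j
      rw [← Finset.mul_sum]
      congr 1
      calc ∑ ω : Fin k → Fin (k+1), Pr ω * Z (ω j) (hs x) i
          = ∑ a, ν a * Z a (hs x) i := by
            simp only [hPr]
            exact E_single ν hν1 j (fun a => Z a (hs x) i)
        _ = Pt x i := hmean x i
    rw [Finset.sum_congr rfl (fun j (_ : j ∈ Finset.univ) => h2 j), Finset.sum_const,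
        Finset.card_univ, Fintype.card_fin, nsmul_eq_mul, ← mul_assoc,
        mul_inv_cancel₀ (ne_of_gt hk0), one_mul]
  have hEvar : ∀ x i, ∑ ω, Pr ω * ((k:ℝ)⁻¹ * (∑ j, Z (ω j) (hs x) i) - Pt x i)^2
      ≤ 1/(4*(k:ℝ)) := by
    intro x i
    set Y : Fin (k+1) → ℝ := fun a => Z a (hs x) i - Pt x i with hY
    have hY0 : ∑ a, ν a * Y a = 0 := by
      simp only [hY]
      rw [Finset.sum_congr rfl (fun a (_ : a ∈ Finset.univ) => mul_sub (ν a) _ _),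
          Finset.sum_sub_distrib, hmean x i, ← Finset.sum_mul, hν1, one_mul, sub_self]
    have hrep : ∀ ω : Fin k → Fin (k+1), (k:ℝ)⁻¹ * (∑ j, Z (ω j) (hs x) i) - Pt x i
        = (k:ℝ)⁻¹ * ∑ j, Y (ω j) := by
      intro ω
      simp only [hY]
      rw [Finset.sum_sub_distrib, Finset.sum_const, Finset.card_univ, Fintype.card_fin,
          nsmul_eq_mul, mul_sub, ← mul_assoc, inv_mul_cancel₀ (ne_of_gt hk0), one_mul]
    have hVar : ∑ a, ν a * (Y a * Y a) ≤ 1/4 := by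
      have hvb := variance_bound ν (fun a => Z a (hs x) i) ((s i x)⁻¹) 1 hν0 hν1
        (fun a => ⟨hZlo a x i, hZhi a x i⟩)
      have hmb : (∑ b, ν b * Z b (hs x) i) = Pt x i := hmean x i
      rw [hmb] at hvb
      have hsle1 : (s i x)⁻¹ ≤ 1 := by
        rw [inv_le_one₀ (hs0 i x)]
        exact le_of_lt (hs1 i x)
      have h5 : (1 - (s i x)⁻¹)^2/4 ≤ 1/4 := by
        have h6 : 0 ≤ 1 - (s i x)⁻¹ := by linarith
        nlinarith [inv_pos.2 (hs0 i x)]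
      calc ∑ a, ν a * (Y a * Y a) = ∑ a, ν a * (Z a (hs x) i - Pt x i)^2 := by
            refine Finset.sum_congr rfl fun a _ => ?_
            simp only [hY]
            ring
        _ ≤ (1 - (s i x)⁻¹)^2/4 := hvb
        _ ≤ 1/4 := h5
    have hinner : ∀ j l : Fin k, ∑ ω, Pr ω * (Y (ω j) * Y (ω l))
        ≤ (if j = l then (1:ℝ)/4 else 0) := by
      intro j l
      by_cases hjl : j = l
      · subst hjl
        rw [if_pos rfl]
        calc ∑ ω, Pr ω * (Y (ω j) * Y (ω j)) = ∑ a, ν a * (Y a * Y a) := by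
              simp only [hPr]
              exact E_single ν hν1 j (fun a => Y a * Y a)
          _ ≤ 1/4 := hVar
      · rw [if_neg hjl]
        have hE := E_pair ν hν1 hjl Y
        simp only [hPr]
        rw [hE, hY0]
        simp
    have e : ∀ ω : Fin k → Fin (k+1), Pr ω * ((k:ℝ)⁻¹ * ∑ j, Y (ω j))^2
        = ∑ j, ∑ l, (k:ℝ)⁻¹^2 * (Pr ω * (Y (ω j) * Y (ω l))) := by
      intro ω
      rw [mul_pow, pow_two ((∑ j, Y (ω j))), Finset.sum_mul_sum]
      simp only [Finset.mul_sum]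
      exact Finset.sum_congr rfl fun j _ => Finset.sum_congr rfl fun l _ => by ring
    calc ∑ ω, Pr ω * ((k:ℝ)⁻¹ * (∑ j, Z (ω j) (hs x) i) - Pt x i)^2
        = ∑ ω : Fin k → Fin (k+1), ∑ j : Fin k, ∑ l : Fin k,
            (k:ℝ)⁻¹^2 * (Pr ω * (Y (ω j) * Y (ω l))) := by
          refine Finset.sum_congr rfl fun ω _ => ?_
          rw [hrep ω, e ω]
      _ = ∑ j : Fin k, ∑ ω : Fin k → Fin (k+1), ∑ l : Fin k,
            (k:ℝ)⁻¹^2 * (Pr ω * (Y (ω j) * Y (ω l))) := Finset.sum_comm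
      _ = ∑ j : Fin k, ∑ l : Fin k, ∑ ω : Fin k → Fin (k+1),
            (k:ℝ)⁻¹^2 * (Pr ω * (Y (ω j) * Y (ω l))) :=
          Finset.sum_congr rfl fun j _ => Finset.sum_comm
      _ = ∑ j : Fin k, ∑ l : Fin k,
            (k:ℝ)⁻¹^2 * ∑ ω, Pr ω * (Y (ω j) * Y (ω l)) := by
          exact Finset.sum_congr rfl fun j _ => Finset.sum_congr rfl fun l _ =>
            (Finset.mul_sum _ _ _).symm
      _ ≤ ∑ j : Fin k, ∑ l : Fin k, (k:ℝ)⁻¹^2 * (if j = l then (1:ℝ)/4 else 0) := by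
          refine Finset.sum_le_sum fun j _ => Finset.sum_le_sum fun l _ => ?_
          exact mul_le_mul_of_nonneg_left (hinner j l) (by positivity)
      _ = 1/(4*(k:ℝ)) := by
          have h7 : ∀ j : Fin k, ∑ l : Fin k, (k:ℝ)⁻¹^2 * (if j = l then (1:ℝ)/4 else 0)
              = (k:ℝ)⁻¹^2 * (1/4) := by
            intro j
            rw [← Finset.mul_sum, Finset.sum_ite_eq Finset.univ j (fun _ => (1:ℝ)/4),
                if_pos (Finset.mem_univ j)]
          rw [Finset.sum_congr rfl (fun j (_ : j ∈ Finset.univ) => h7 j), Finset.sum_const,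
              Finset.card_univ, Fintype.card_fin, nsmul_eq_mul]
          field_simp
  -- lower bound for the sparsified functions
  have hQlo : ∀ (ω : Fin k → Fin (k+1)) x i, (s i x)⁻¹ ≤ (k:ℝ)⁻¹ * ∑ j, Z (ω j) (hs x) i := by
    intro ω x i
    have h1 : ∑ j : Fin k, (s i x)⁻¹ ≤ ∑ j, Z (ω j) (hs x) i :=
      Finset.sum_le_sum fun j _ => hZlo (ω j) x i
    rw [Finset.sum_const, Finset.card_univ, Fintype.card_fin, nsmul_eq_mul] at h1
    calc (s i x)⁻¹ = (k:ℝ)⁻¹ * ((k:ℝ) * (s i x)⁻¹) := by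
          rw [← mul_assoc, inv_mul_cancel₀ (ne_of_gt hk0), one_mul]
      _ ≤ (k:ℝ)⁻¹ * ∑ j, Z (ω j) (hs x) i :=
        mul_le_mul_of_nonneg_left h1 (le_of_lt hkR0)
  -- per-x expected KL bound
  have hMx : ∀ x, ∑ ω, Pr ω * klVec (fun i => (k:ℝ)⁻¹ * ∑ j, Z (ω j) (hs x) i) (fw (hw x))
      ≤ klVec (Pt x) (fw (hw x)) + (∑ i, s i x)/(8*(k:ℝ)) := by
    intro x
    have hKL2 : ∀ ω : Fin k → Fin (k+1),
        klVec (fun i => (k:ℝ)⁻¹ * ∑ j, Z (ω j) (hs x) i) (fw (hw x))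
        ≤ klVec (Pt x) (fw (hw x))
          + ∑ i, (Real.log (Pt x i / fw (hw x) i) + 1)
              * ((k:ℝ)⁻¹ * (∑ j, Z (ω j) (hs x) i) - Pt x i)
          + ∑ i, s i x * ((k:ℝ)⁻¹ * (∑ j, Z (ω j) (hs x) i) - Pt x i)^2/2 := fun ω =>
      klVec_second_order (Pt x) (fun i => (k:ℝ)⁻¹ * ∑ j, Z (ω j) (hs x) i) (fw (hw x))
        (fun i => s i x) (hR0 x) (fun i => hs0 i x) (fun i => hPtlo x i) (fun i => hQlo ω x i)
    have hE0 : ∀ i, ∑ ω, Pr ω * ((k:ℝ)⁻¹ * (∑ j, Z (ω j) (hs x) i) - Pt x i) = 0 := by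
      intro i
      rw [Finset.sum_congr rfl (fun ω (_ : ω ∈ Finset.univ) => mul_sub (Pr ω) _ _),
          Finset.sum_sub_distrib, hEmean x i, ← Finset.sum_mul, hPr1, one_mul, sub_self]
    calc ∑ ω, Pr ω * klVec (fun i => (k:ℝ)⁻¹ * ∑ j, Z (ω j) (hs x) i) (fw (hw x))
        ≤ ∑ ω, Pr ω * (klVec (Pt x) (fw (hw x))
          + ∑ i, (Real.log (Pt x i / fw (hw x) i) + 1)
              * ((k:ℝ)⁻¹ * (∑ j, Z (ω j) (hs x) i) - Pt x i)
          + ∑ i, s i x * ((k:ℝ)⁻¹ * (∑ j, Z (ω j) (hs x) i) - Pt x i)^2/2) :=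
          Finset.sum_le_sum fun ω _ => mul_le_mul_of_nonneg_left (hKL2 ω) (hPr0 ω)
      _ = (∑ ω, Pr ω * klVec (Pt x) (fw (hw x)))
          + (∑ ω, Pr ω * ∑ i, (Real.log (Pt x i / fw (hw x) i) + 1)
              * ((k:ℝ)⁻¹ * (∑ j, Z (ω j) (hs x) i) - Pt x i))
          + (∑ ω, Pr ω * ∑ i, s i x * ((k:ℝ)⁻¹ * (∑ j, Z (ω j) (hs x) i) - Pt x i)^2/2) := by
          rw [← Finset.sum_add_distrib, ← Finset.sum_add_distrib]
          exact Finset.sum_congr rfl fun ω _ => by ring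
      _ = klVec (Pt x) (fw (hw x))
          + (∑ i, (Real.log (Pt x i / fw (hw x) i) + 1)
              * ∑ ω, Pr ω * ((k:ℝ)⁻¹ * (∑ j, Z (ω j) (hs x) i) - Pt x i))
          + (∑ i, (s i x / 2)
              * ∑ ω, Pr ω * ((k:ℝ)⁻¹ * (∑ j, Z (ω j) (hs x) i) - Pt x i)^2) := by
          congr 1
          · congr 1
            · rw [← Finset.sum_mul, hPr1, one_mul]
            · rw [Finset.sum_congr rfl (fun ω (_ : ω ∈ Finset.univ) =>
                Finset.mul_sum Finset.univ _ (Pr ω)), Finset.sum_comm]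
              refine Finset.sum_congr rfl fun i _ => ?_
              rw [Finset.mul_sum]
              exact Finset.sum_congr rfl fun ω _ => by ring
          · rw [Finset.sum_congr rfl (fun ω (_ : ω ∈ Finset.univ) =>
              Finset.mul_sum Finset.univ _ (Pr ω)), Finset.sum_comm]
            refine Finset.sum_congr rfl fun i _ => ?_
            rw [Finset.mul_sum]
            exact Finset.sum_congr rfl fun ω _ => by ring
      _ ≤ klVec (Pt x) (fw (hw x)) + 0 + (∑ i, s i x)/(8*(k:ℝ)) := by
          have hB : ∑ i, (Real.log (Pt x i / fw (hw x) i) + 1)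
              * (∑ ω, Pr ω * ((k:ℝ)⁻¹ * (∑ j, Z (ω j) (hs x) i) - Pt x i)) = 0 := by
            rw [Finset.sum_congr rfl (fun i (_ : i ∈ Finset.univ) => by rw [hE0 i, mul_zero])]
            exact Finset.sum_const_zero
          rw [hB]
          have hC : ∑ i, (s i x / 2)
              * (∑ ω, Pr ω * ((k:ℝ)⁻¹ * (∑ j, Z (ω j) (hs x) i) - Pt x i)^2)
              ≤ (∑ i, s i x)/(8*(k:ℝ)) := by
            calc ∑ i, (s i x / 2)
                * (∑ ω, Pr ω * ((k:ℝ)⁻¹ * (∑ j, Z (ω j) (hs x) i) - Pt x i)^2)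
                ≤ ∑ i, (s i x / 2) * (1/(4*(k:ℝ))) :=
                  Finset.sum_le_sum fun i _ => mul_le_mul_of_nonneg_left (hEvar x i)
                    (by linarith [hs0 i x])
              _ = (∑ i, s i x)/(8*(k:ℝ)) := by
                  rw [Finset.sum_congr rfl (fun i (_ : i ∈ Finset.univ) =>
                    (by ring : (s i x / 2) * (1/(4*(k:ℝ))) = s i x * (8*(k:ℝ))⁻¹)),
                    ← Finset.sum_mul, div_eq_mul_inv]
          linarith
      _ = klVec (Pt x) (fw (hw x)) + (∑ i, s i x)/(8*(k:ℝ)) := by ring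
  -- average over x
  have hMav : ∑ ω, Pr ω * (∑ x, μ x * klVec (fun i => (k:ℝ)⁻¹ * ∑ j, Z (ω j) (hs x) i) (fw (hw x)))
      ≤ (∑ x, μ x * klVec (Pt x) (fw (hw x))) + S/(8*(k:ℝ)) := by
    calc ∑ ω, Pr ω * (∑ x, μ x * klVec (fun i => (k:ℝ)⁻¹ * ∑ j, Z (ω j) (hs x) i) (fw (hw x)))
        = ∑ x, μ x * (∑ ω, Pr ω * klVec (fun i => (k:ℝ)⁻¹ * ∑ j, Z (ω j) (hs x) i) (fw (hw x))) := by
          rw [Finset.sum_congr rfl (fun ω (_ : ω ∈ Finset.univ) =>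
            Finset.mul_sum Finset.univ _ (Pr ω)), Finset.sum_comm]
          refine Finset.sum_congr rfl fun x _ => ?_
          rw [Finset.mul_sum]
          exact Finset.sum_congr rfl fun ω _ => by ring
      _ ≤ ∑ x, μ x * (klVec (Pt x) (fw (hw x)) + (∑ i, s i x)/(8*(k:ℝ))) :=
          Finset.sum_le_sum fun x _ => mul_le_mul_of_nonneg_left (hMx x) (hμ0 x)
      _ = (∑ x, μ x * klVec (Pt x) (fw (hw x))) + S/(8*(k:ℝ)) := by
          rw [Finset.sum_congr rfl (fun x (_ : x ∈ Finset.univ) => mul_add (μ x) _ _),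
              Finset.sum_add_distrib]
          congr 1
          rw [Finset.sum_congr rfl (fun x (_ : x ∈ Finset.univ) =>
            (by ring : μ x * ((∑ i, s i x)/(8*(k:ℝ))) = (μ x * ∑ i, s i x)/(8*(k:ℝ)))),
            ← Finset.sum_div, ← hST]
  have hex : ∃ ω : Fin k → Fin (k+1),
      (∑ x, μ x * klVec (fun i => (k:ℝ)⁻¹ * ∑ j, Z (ω j) (hs x) i) (fw (hw x)))
      ≤ (∑ x, μ x * klVec (Pt x) (fw (hw x))) + S/(8*(k:ℝ)) := by
    by_contra hcon
    push_neg at hcon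
    obtain ⟨ω₀, hω₀⟩ : ∃ ω₀ : Fin k → Fin (k+1), Pr ω₀ ≠ 0 := by
      by_contra hall
      push_neg at hall
      rw [Finset.sum_congr rfl (fun ω (_ : ω ∈ Finset.univ) => hall ω)] at hPr1
      simp at hPr1
    have hlt : ∑ ω : Fin k → Fin (k+1),
        Pr ω * ((∑ x, μ x * klVec (Pt x) (fw (hw x))) + S/(8*(k:ℝ)))
        < ∑ ω, Pr ω * (∑ x, μ x * klVec (fun i => (k:ℝ)⁻¹ * ∑ j, Z (ω j) (hs x) i) (fw (hw x))) := by
      apply Finset.sum_lt_sum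
      · intro ω _
        exact mul_le_mul_of_nonneg_left (le_of_lt (hcon ω)) (hPr0 ω)
      · exact ⟨ω₀, Finset.mem_univ ω₀,
          mul_lt_mul_of_pos_left (hcon ω₀) (lt_of_le_of_ne (hPr0 ω₀) (Ne.symm hω₀))⟩
    rw [← Finset.sum_mul, hPr1, one_mul] at hlt
    linarith [hMav]
  obtain ⟨ω₁, hω₁⟩ := hex
  clear hMav hMx hEvar hEmean
  have hQmem : (∑ j, (k:ℝ)⁻¹ • Z (ω₁ j)) ∈ convComb k 𝓕 := by
    refine ⟨fun _ => (k:ℝ)⁻¹, fun j => Z (ω₁ j), fun j => le_of_lt hkR0, ?_,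
      fun j => hZF _, rfl⟩
    rw [Finset.sum_const, Finset.card_univ, Fintype.card_fin, nsmul_eq_mul,
        mul_inv_cancel₀ (ne_of_gt hk0)]
  have hQev : ∀ x, (∑ j, (k:ℝ)⁻¹ • Z (ω₁ j)) (hs x)
      = fun i => (k:ℝ)⁻¹ * ∑ j, Z (ω₁ j) (hs x) i := by
    intro x
    funext i
    rw [Finset.sum_apply, Finset.sum_apply]
    simp only [Pi.smul_apply, smul_eq_mul]
    rw [← Finset.mul_sum]
  have hinf : (⨅ f : convComb k 𝓕,
        ∑ x, μ x * klVec ((f : (Fin ds → ℝ) → Fin c → ℝ) (hs x)) (fw (hw x)))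
      ≤ ∑ x, μ x * klVec (fun i => (k:ℝ)⁻¹ * ∑ j, Z (ω₁ j) (hs x) i) (fw (hw x)) := by
    have hbdd : BddBelow (Set.range (fun f : convComb k 𝓕 =>
        ∑ x, μ x * klVec ((f : (Fin ds → ℝ) → Fin c → ℝ) (hs x)) (fw (hw x)))) := by
      refine ⟨0, ?_⟩
      rintro y ⟨f, rfl⟩
      exact hLL0 f f.2
    have h2 := ciInf_le hbdd (⟨∑ j, (k:ℝ)⁻¹ • Z (ω₁ j), hQmem⟩ : convComb k 𝓕)
    have hval : (((⟨∑ j, (k:ℝ)⁻¹ • Z (ω₁ j), hQmem⟩ : convComb k 𝓕) :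
        (Fin ds → ℝ) → Fin c → ℝ)) = ∑ j, (k:ℝ)⁻¹ • Z (ω₁ j) := rfl
    rw [Finset.sum_congr rfl (fun x (_ : x ∈ Finset.univ) => by
      rw [hval, hQev x])] at h2
    exact h2
  have hchain : ∑ x, μ x * klVec (F0 (hs x)) (fw (hw x))
      ≤ (∑ x, μ x * klVec (Pt x) (fw (hw x))) + S/(8*(k:ℝ)) + t*ε := by
    linarith [hnear, hinf, hω₁]
  clear hinf hω₁ hnear hQev hQmem hPr0 hPr1
  -- convexity
  have hconv : ∀ x, klVec (Pt x) (fw (hw x)) + t * klVec (g x) (Pt x)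
      ≤ (1-t) * klVec (F0 (hs x)) (fw (hw x)) + t * klVec (g x) (fw (hw x)) := by
    intro x
    exact klVec_mix (F0 (hs x)) (g x) (fw (hw x)) t ht0 ht1
      (hPpos x) (fun i => hg0 x i) (hR0 x) ((hP x).2) (hgsum x)
  have hconvsum : (∑ x, μ x * klVec (Pt x) (fw (hw x)))
        + t * (∑ x, μ x * klVec (g x) (Pt x))
      ≤ (1-t) * (∑ x, μ x * klVec (F0 (hs x)) (fw (hw x)))
        + t * (∑ x, μ x * klVec (g x) (fw (hw x))) := by
    have h1 : ∑ x, μ x * (klVec (Pt x) (fw (hw x)) + t * klVec (g x) (Pt x))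
        ≤ ∑ x, μ x * ((1-t) * klVec (F0 (hs x)) (fw (hw x)) + t * klVec (g x) (fw (hw x))) :=
      Finset.sum_le_sum fun x _ => mul_le_mul_of_nonneg_left (hconv x) (hμ0 x)
    have e1 : ∑ x, μ x * (klVec (Pt x) (fw (hw x)) + t * klVec (g x) (Pt x))
        = (∑ x, μ x * klVec (Pt x) (fw (hw x))) + t * (∑ x, μ x * klVec (g x) (Pt x)) := by
      rw [Finset.sum_congr rfl (fun x (_ : x ∈ Finset.univ) =>
        (by ring : μ x * (klVec (Pt x) (fw (hw x)) + t * klVec (g x) (Pt x))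
          = μ x * klVec (Pt x) (fw (hw x)) + t * (μ x * klVec (g x) (Pt x)))),
        Finset.sum_add_distrib, ← Finset.mul_sum]
    have e2 : ∑ x, μ x * ((1-t) * klVec (F0 (hs x)) (fw (hw x)) + t * klVec (g x) (fw (hw x)))
        = (1-t) * (∑ x, μ x * klVec (F0 (hs x)) (fw (hw x)))
          + t * (∑ x, μ x * klVec (g x) (fw (hw x))) := by
      rw [Finset.sum_congr rfl (fun x (_ : x ∈ Finset.univ) =>
        (by ring : μ x * ((1-t) * klVec (F0 (hs x)) (fw (hw x)) + t * klVec (g x) (fw (hw x)))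
          = (1-t) * (μ x * klVec (F0 (hs x)) (fw (hw x))) + t * (μ x * klVec (g x) (fw (hw x))))),
        Finset.sum_add_distrib, ← Finset.mul_sum, ← Finset.mul_sum]
    rw [e1, e2] at h1
    exact h1
  clear_value S m W t G F0 Pt ν Z Pr
  set KLP : ℝ := ∑ x, μ x * klVec (F0 (hs x)) (fw (hw x)) with hKLP
  set KLG : ℝ := ∑ x, μ x * klVec (g x) (fw (hw x)) with hKLG
  set DPt : ℝ := ∑ x, μ x * klVec (g x) (Pt x) with hDPt
  have hdiv : KLP - KLG + DPt ≤ S/(8*(k:ℝ)*t) + ε := by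
    have h1 : t * (KLP - KLG + DPt) ≤ S/(8*(k:ℝ)) + t*ε := by
      nlinarith [hchain, hconvsum]
    have h2 : KLP - KLG + DPt ≤ (S/(8*(k:ℝ)) + t*ε)/t := by
      rw [le_div_iff₀ ht0]
      nlinarith [h1]
    calc KLP - KLG + DPt ≤ (S/(8*(k:ℝ)) + t*ε)/t := h2
      _ = S/(8*(k:ℝ)*t) + ε := by
        rw [add_div, div_div, mul_div_cancel_left₀ _ (ne_of_gt ht0)]
  -- step (6): D ≤ DPt + t V
  set D : ℝ := ∑ x, μ x * klVec (g x) (F0 (hs x)) with hD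
  set V : ℝ := ∑ x, μ x * (∑ i, (g x i - F0 (hs x) i)^2 / F0 (hs x) i) with hV
  clear_value KLP KLG DPt D V
  have hDx : ∀ x, klVec (g x) (F0 (hs x)) ≤ klVec (g x) (Pt x)
      + t * ∑ i, (g x i - F0 (hs x) i)^2 / F0 (hs x) i := by
    intro x
    have key : ∀ i, g x i * Real.log (g x i / F0 (hs x) i)
        ≤ g x i * Real.log (g x i / Pt x i)
          + t*((g x i - F0 (hs x) i)^2 / F0 (hs x) i) + t*(g x i - F0 (hs x) i) := by
      intro i
      have hP0 := hPpos x i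
      have hg0' := hg0 x i
      have hPt0 := hPtpos x i
      have e1 : Real.log (g x i / F0 (hs x) i)
          = Real.log (g x i) - Real.log (F0 (hs x) i) :=
        Real.log_div (ne_of_gt hg0') (ne_of_gt hP0)
      have e2 : Real.log (g x i / Pt x i) = Real.log (g x i) - Real.log (Pt x i) :=
        Real.log_div (ne_of_gt hg0') (ne_of_gt hPt0)
      have e3 : Real.log (Pt x i / F0 (hs x) i)
          = Real.log (Pt x i) - Real.log (F0 (hs x) i) :=
        Real.log_div (ne_of_gt hPt0) (ne_of_gt hP0)
      have e4 : Real.log (Pt x i / F0 (hs x) i) ≤ Pt x i / F0 (hs x) i - 1 :=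
        Real.log_le_sub_one_of_pos (div_pos hPt0 hP0)
      have e5 : Pt x i = F0 (hs x) i + t * (g x i - F0 (hs x) i) := by
        rw [hPt]; dsimp only; ring
      have e6 : g x i * (Pt x i / F0 (hs x) i - 1)
          = t*((g x i - F0 (hs x) i)^2 / F0 (hs x) i) + t*(g x i - F0 (hs x) i) := by
        rw [e5]
        field_simp
        ring
      have e8 : g x i * Real.log (g x i / F0 (hs x) i)
            - g x i * Real.log (g x i / Pt x i)
          = g x i * Real.log (Pt x i / F0 (hs x) i) := by
        rw [e1, e2, e3]; ring
      have e9 : g x i * Real.log (Pt x i / F0 (hs x) i)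
          ≤ g x i * (Pt x i / F0 (hs x) i - 1) :=
        mul_le_mul_of_nonneg_left e4 (le_of_lt hg0')
      linarith [e8, e9, e6]
    have hzero : ∑ i, (g x i - F0 (hs x) i) = 0 := by
      rw [Finset.sum_sub_distrib, hgsum x, (hP x).2, sub_self]
    calc klVec (g x) (F0 (hs x))
        ≤ ∑ i, (g x i * Real.log (g x i / Pt x i)
            + t*((g x i - F0 (hs x) i)^2 / F0 (hs x) i) + t*(g x i - F0 (hs x) i)) :=
          Finset.sum_le_sum fun i _ => key i
      _ = klVec (g x) (Pt x) + t * (∑ i, (g x i - F0 (hs x) i)^2 / F0 (hs x) i)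
            + t * ∑ i, (g x i - F0 (hs x) i) := by
          rw [Finset.sum_add_distrib, Finset.sum_add_distrib, ← Finset.mul_sum, ← Finset.mul_sum]
          rfl
      _ = klVec (g x) (Pt x) + t * ∑ i, (g x i - F0 (hs x) i)^2 / F0 (hs x) i := by
          rw [hzero, mul_zero, add_zero]
  have hDsum : D ≤ DPt + t * V := by
    rw [hD, hDPt, hV]
    calc ∑ x, μ x * klVec (g x) (F0 (hs x))
        ≤ ∑ x, μ x * (klVec (g x) (Pt x)
            + t * ∑ i, (g x i - F0 (hs x) i)^2 / F0 (hs x) i) :=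
          Finset.sum_le_sum fun x _ => mul_le_mul_of_nonneg_left (hDx x) (hμ0 x)
      _ = (∑ x, μ x * klVec (g x) (Pt x))
          + t * (∑ x, μ x * (∑ i, (g x i - F0 (hs x) i)^2 / F0 (hs x) i)) := by
          rw [Finset.sum_congr rfl (fun x (_ : x ∈ Finset.univ) =>
            (by ring : μ x * (klVec (g x) (Pt x)
              + t * ∑ i, (g x i - F0 (hs x) i)^2 / F0 (hs x) i)
              = μ x * klVec (g x) (Pt x)
                + t * (μ x * (∑ i, (g x i - F0 (hs x) i)^2 / F0 (hs x) i)))),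
            Finset.sum_add_distrib, ← Finset.mul_sum]
  -- V ≤ W
  have hchi : ∀ x, ∑ i, (g x i - F0 (hs x) i)^2 / F0 (hs x) i
      ≤ (∑ i, s i x) - (c:ℝ)^2 := by
    intro x
    have hub : ∀ i, (g x i - F0 (hs x) i)^2 ≤ (1 - ∑ j, (s j x)⁻¹)^2 := by
      intro i
      have hgub : g x i ≤ 1 - (∑ j, (s j x)⁻¹) + (s i x)⁻¹ := by
        have h1 : ∑ j ∈ Finset.univ.erase i, g x j + g x i = 1 := by
          rw [Finset.sum_erase_add Finset.univ _ (Finset.mem_univ i)]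
          exact hgsum x
        have h2 : ∑ j ∈ Finset.univ.erase i, (s j x)⁻¹ ≤ ∑ j ∈ Finset.univ.erase i, g x j :=
          Finset.sum_le_sum fun j _ => hgs_lo j x
        have h3 : ∑ j ∈ Finset.univ.erase i, (s j x)⁻¹ + (s i x)⁻¹ = ∑ j, (s j x)⁻¹ :=
          Finset.sum_erase_add Finset.univ _ (Finset.mem_univ i)
        linarith
      have hPub : F0 (hs x) i ≤ 1 - (∑ j, (s j x)⁻¹) + (s i x)⁻¹ := by
        have h1 : ∑ j ∈ Finset.univ.erase i, F0 (hs x) j + F0 (hs x) i = 1 := by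
          rw [Finset.sum_erase_add Finset.univ _ (Finset.mem_univ i)]
          exact (hP x).2
        have h2 : ∑ j ∈ Finset.univ.erase i, (s j x)⁻¹
            ≤ ∑ j ∈ Finset.univ.erase i, F0 (hs x) j :=
          Finset.sum_le_sum fun j _ => ((hP x).1 j).1
        have h3 : ∑ j ∈ Finset.univ.erase i, (s j x)⁻¹ + (s i x)⁻¹ = ∑ j, (s j x)⁻¹ :=
          Finset.sum_erase_add Finset.univ _ (Finset.mem_univ i)
        linarith
      have hglb := hgs_lo i x
      have hPlb := ((hP x).1 i).1
      apply sq_le_sq'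
      · linarith
      · linarith
    calc ∑ i, (g x i - F0 (hs x) i)^2 / F0 (hs x) i
        ≤ ∑ i, (g x i - F0 (hs x) i)^2 * s i x := by
          refine Finset.sum_le_sum fun i _ => ?_
          rw [div_eq_mul_inv]
          exact mul_le_mul_of_nonneg_left
            ((inv_le_comm₀ (hPpos x i) (hs0 i x)).2 ((hP x).1 i).1) (sq_nonneg _)
      _ ≤ ∑ i, (1 - ∑ j, (s j x)⁻¹)^2 * s i x :=
          Finset.sum_le_sum fun i _ => mul_le_mul_of_nonneg_right (hub i) (le_of_lt (hs0 i x))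
      _ = (1 - ∑ j, (s j x)⁻¹)^2 * ∑ i, s i x := by rw [← Finset.mul_sum]
      _ ≤ (∑ i, s i x) - (c:ℝ)^2 :=
          chi_step _ _ _ (hCS x) (hσ1 x) (hσ0 x) (hT0 x)
  have hVW : V ≤ W := by
    rw [hV, hW]
    calc ∑ x, μ x * (∑ i, (g x i - F0 (hs x) i)^2 / F0 (hs x) i)
        ≤ ∑ x, μ x * ((∑ i, s i x) - (c:ℝ)^2) :=
          Finset.sum_le_sum fun x _ => mul_le_mul_of_nonneg_left (hchi x) (hμ0 x)
      _ = (∑ x, μ x * (∑ i, s i x)) - (c:ℝ)^2 := by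
          rw [Finset.sum_congr rfl (fun x (_ : x ∈ Finset.univ) => mul_sub (μ x) _ _),
              Finset.sum_sub_distrib, ← Finset.sum_mul, hμsum, one_mul]
      _ = S - (c:ℝ)^2 := by rw [← hST]
  have hfinal : KLP - KLG + D ≤ S/(8*(k:ℝ)) + G + ε := by
    have h2 : t*V ≤ t*W := mul_le_mul_of_nonneg_left hVW (le_of_lt ht0)
    have h3 : S/(8*(k:ℝ)*t) = S/(8*(k:ℝ))/t := by rw [div_div]
    linarith [hdiv, htkey, hDsum, h2]
  -- rewrite the goal
  have hGeq : m ^ ((3:ℝ)/2) * Real.sqrt ((c:ℝ)/(4*(k:ℝ))) = G := by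
    rw [hG]
    have hm0' : (0:ℝ) ≤ m := le_of_lt hm0
    have e1 : m ^ ((3:ℝ)/2) = Real.sqrt (m^3) := by
      rw [show ((3:ℝ)/2) = (3:ℝ) * (1/2) by norm_num, Real.rpow_mul hm0',
          show ((3:ℝ)) = ((3:ℕ):ℝ) by norm_num, Real.rpow_natCast,
          ← Real.sqrt_eq_rpow]
    rw [e1, ← Real.sqrt_mul (by positivity : (0:ℝ) ≤ m^3)]
    congr 1
    ring
  have hxe : ∀ (x : 𝒳) (q : Fin c → ℝ), (∀ i, 0 < q i) →
      xeVec (g x) q = klVec (g x) q - ∑ i, g x i * Real.log (g x i) := by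
    intro x q hq
    have h1 : klVec (g x) q
        = (∑ i, g x i * Real.log (g x i)) - ∑ i, g x i * Real.log (q i) := by
      unfold klVec
      rw [← Finset.sum_sub_distrib]
      refine Finset.sum_congr rfl fun i _ => ?_
      rw [Real.log_div (ne_of_gt (hg0 x i)) (ne_of_gt (hq i))]
      ring
    unfold xeVec
    rw [h1]
    ring
  have hgoal1 : ∑ x, μ x * xeVec (g x) (F0 (hs x))
      = D - ∑ x, μ x * (∑ i, g x i * Real.log (g x i)) := by
    rw [hD, ← Finset.sum_sub_distrib]
    refine Finset.sum_congr rfl fun x _ => ?_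
    rw [hxe x _ (hPpos x)]
    ring
  have hgoal2 : ∑ x, μ x * xeVec (g x) (fw (hw x))
      = KLG - ∑ x, μ x * (∑ i, g x i * Real.log (g x i)) := by
    rw [hKLG, ← Finset.sum_sub_distrib]
    refine Finset.sum_congr rfl fun x _ => ?_
    rw [hxe x _ (hR0 x)]
    ring
  rw [hgoal1, hgoal2, hGeq]
  have h8 : (1/(8*(k:ℝ))) * S = S/(8*(k:ℝ)) := by ring
  linarith [hfinal]
end
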